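/- arXiv:2407.19227 — 4 statements merged into one kernel-verified Lean document; each statement's English description precedes it below -/
import Mathlib

section
/- Let G(u,t) = exp(∑_{j=1}^k (Λ_j(t)(u^j − 1) + T_j(t)(u^{−j} − 1))) for u > 0. Then for every r ≥ 1, the r-th derivative of G with respect to u, evaluated at u = 1, satisfies the recursion: G^{(r)}(1,t) = ∑_{m=0}^{r-1} C(r-1, m) G^{(m)}(1,t) · ∑_{j=1}^k [Λ_j(t) P(j, r−m) + T_j(t) P(−j, r−m)], where P(a,b) = a(a−1)···(a−b+1) is the falling factorial. -/
open Finset Topology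

/-- Falling factorial `P(a,b) = a(a-1)⋯(a-b+1)` for real `a`. -/
noncomputable def fallingFactorial (a : ℝ) (b : ℕ) : ℝ :=
  ∏ i ∈ Finset.range b, (a - i)

lemma fallingFactorial_succ_left (a : ℝ) (b : ℕ) :
    fallingFactorial a (b + 1) = a * ∏ i ∈ Finset.range b, (a - 1 - i) := by
  rw [fallingFactorial, Finset.prod_range_succ', mul_comm]
  have h0 : a - ((0 : ℕ) : ℝ) = a := by simp
  rw [h0]
  congr 1
  refine Finset.prod_congr rfl fun i _ => ?_
  push_cast; ring

lemma iteratedDeriv_eq_within {s : Set ℝ} (hs : IsOpen s) {x : ℝ} (hx : x ∈ s)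
    (n : ℕ) (f : ℝ → ℝ) : iteratedDeriv n f x = iteratedDerivWithin n f s x := by
  simp only [iteratedDeriv, iteratedDerivWithin, iteratedFDerivWithin_of_isOpen n hs hx]

lemma my_iteratedDeriv_add {s : Set ℝ} (hs : IsOpen s) {x : ℝ} (hx : x ∈ s) (n : ℕ)
    {f g : ℝ → ℝ} (hf : ContDiffOn ℝ ⊤ f s) (hg : ContDiffOn ℝ ⊤ g s) :
    iteratedDeriv n (fun u => f u + g u) x = iteratedDeriv n f x + iteratedDeriv n g x := by
  rw [iteratedDeriv_eq_within hs hx n, iteratedDeriv_eq_within hs hx n f,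
    iteratedDeriv_eq_within hs hx n g]
  exact iteratedDerivWithin_add hx hs.uniqueDiffOn ((hf x hx).of_le le_top) ((hg x hx).of_le le_top)

lemma my_iteratedDeriv_const_mul {s : Set ℝ} (hs : IsOpen s) {x : ℝ} (hx : x ∈ s) (n : ℕ)
    (c : ℝ) {f : ℝ → ℝ} (hf : ContDiffOn ℝ ⊤ f s) :
    iteratedDeriv n (fun u => c * f u) x = c * iteratedDeriv n f x := by
  rw [iteratedDeriv_eq_within hs hx n, iteratedDeriv_eq_within hs hx n f]
  exact iteratedDerivWithin_const_mul hx hs.uniqueDiffOn c ((hf x hx).of_le le_top)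

lemma my_iteratedDeriv_zero (n : ℕ) (x : ℝ) :
    iteratedDeriv n (fun _ : ℝ => (0 : ℝ)) x = 0 := by
  have : iteratedDeriv n (fun _ : ℝ => (0 : ℝ)) = fun _ => 0 := by
    induction n with
    | zero => simp [iteratedDeriv_zero]
    | succ n ih => rw [iteratedDeriv_succ, ih]; simp
  rw [this]

lemma my_iteratedDeriv_sum {s : Set ℝ} (hs : IsOpen s) {x : ℝ} (hx : x ∈ s) (n : ℕ)
    {ι : Type*} (t : Finset ι) (F : ι → ℝ → ℝ)
    (hF : ∀ i ∈ t, ContDiffOn ℝ ⊤ (F i) s) :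
    iteratedDeriv n (fun u => ∑ i ∈ t, F i u) x = ∑ i ∈ t, iteratedDeriv n (F i) x := by
  classical
  revert hF
  induction t using Finset.induction_on with
  | empty => intro _; simpa using my_iteratedDeriv_zero n x
  | @insert a t' hnot ih =>
    intro hF
    have hFa : ContDiffOn ℝ ⊤ (F a) s := hF a (Finset.mem_insert_self a t')
    have hFt : ContDiffOn ℝ ⊤ (fun u => ∑ i ∈ t', F i u) s :=
      ContDiffOn.sum fun i hi => hF i (Finset.mem_insert_of_mem hi)
    have hsum : (fun u => ∑ i ∈ insert a t', F i u)
        = fun u => F a u + ∑ i ∈ t', F i u := by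
      funext u; rw [Finset.sum_insert hnot]
    rw [hsum, my_iteratedDeriv_add hs hx n hFa hFt,
      ih (fun i hi => hF i (Finset.mem_insert_of_mem hi)), Finset.sum_insert hnot]

lemma contDiffOn_zpow_Ioi (m : ℤ) : ContDiffOn ℝ ⊤ (fun u : ℝ => u ^ m) (Set.Ioi 0) := by
  intro x hx
  have hx0 : x ≠ 0 := ne_of_gt hx
  apply ContDiffAt.contDiffWithinAt
  cases m with
  | ofNat n =>
    have : (fun u : ℝ => u ^ (Int.ofNat n)) = fun u : ℝ => u ^ n := by
      funext u; simp [zpow_natCast]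
    rw [this]; exact (contDiff_id.pow n).contDiffAt
  | negSucc n =>
    have : (fun u : ℝ => u ^ (Int.negSucc n)) = fun u : ℝ => (u ^ (n + 1))⁻¹ := by
      funext u; rw [zpow_negSucc]
    rw [this]
    exact (contDiffAt_inv ℝ (pow_ne_zero _ hx0)).comp x (contDiff_id.pow (n + 1)).contDiffAt

lemma iteratedDeriv_zpow_one (m : ℤ) (b : ℕ) :
    iteratedDeriv b (fun u : ℝ => u ^ m) 1 = ∏ i ∈ Finset.range b, ((m : ℝ) - i) := by
  rw [iteratedDeriv_eq_iterate, iter_deriv_zpow]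
  simp

/-- Leibniz rule for iterated derivatives of smooth functions on an open set. -/
lemma my_leibniz {s : Set ℝ} (hs : IsOpen s) :
    ∀ (n : ℕ) (f g : ℝ → ℝ), ContDiffOn ℝ ⊤ f s → ContDiffOn ℝ ⊤ g s →
      ∀ x ∈ s, iteratedDeriv n (fun u => f u * g u) x =
        ∑ i ∈ Finset.range (n + 1),
          (n.choose i : ℝ) * iteratedDeriv i f x * iteratedDeriv (n - i) g x := by
  intro n
  induction n with
  | zero => intro f g _ _ x _; simp
  | succ n IH =>
    intro f g hf hg x hx
    have hf' : ContDiffOn ℝ ⊤ (deriv f) s := hf.deriv_of_isOpen hs le_top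
    have hg' : ContDiffOn ℝ ⊤ (deriv g) s := hg.deriv_of_isOpen hs le_top
    have key : deriv (fun u => f u * g u)
        =ᶠ[𝓝 x] fun u => deriv f u * g u + f u * deriv g u := by
      filter_upwards [hs.mem_nhds hx] with y hy
      exact deriv_mul ((hf.contDiffAt (hs.mem_nhds hy)).differentiableAt (by simp))
        ((hg.contDiffAt (hs.mem_nhds hy)).differentiableAt (by simp))
    rw [iteratedDeriv_succ', key.iteratedDeriv_eq n,
      my_iteratedDeriv_add hs hx n (hf'.mul hg) (hf.mul hg'),
      IH (deriv f) g hf' hg x hx, IH f (deriv g) hf hg' x hx]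
    have key2 : ∑ i ∈ Finset.range (n + 1 + 1),
        ((n + 1).choose i : ℝ) * iteratedDeriv i f x * iteratedDeriv (n + 1 - i) g x
        = (∑ i ∈ Finset.range (n + 1),
            (n.choose i : ℝ) * (iteratedDeriv i f x * iteratedDeriv (n + 1 - i) g x))
          + ∑ i ∈ Finset.range (n + 1),
            (n.choose i : ℝ) * (iteratedDeriv (i + 1) f x * iteratedDeriv (n - i) g x) := by
      simp only [mul_assoc]
      rw [show n + 1 + 1 = n + 2 from rfl, Finset.sum_choose_succ_mul
        (fun a b => iteratedDeriv a f x * iteratedDeriv b g x) n]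
    have eS1 : ∑ i ∈ Finset.range (n + 1),
        (n.choose i : ℝ) * iteratedDeriv i (deriv f) x * iteratedDeriv (n - i) g x
        = ∑ i ∈ Finset.range (n + 1),
          (n.choose i : ℝ) * (iteratedDeriv (i + 1) f x * iteratedDeriv (n - i) g x) := by
      refine Finset.sum_congr rfl fun i _ => ?_
      rw [← iteratedDeriv_succ', mul_assoc]
    have eS2 : ∑ i ∈ Finset.range (n + 1),
        (n.choose i : ℝ) * iteratedDeriv i f x * iteratedDeriv (n - i) (deriv g) x
        = ∑ i ∈ Finset.range (n + 1),
          (n.choose i : ℝ) * (iteratedDeriv i f x * iteratedDeriv (n + 1 - i) g x) := by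
      refine Finset.sum_congr rfl fun i hi => ?_
      have hin : i ≤ n := Nat.lt_succ_iff.mp (Finset.mem_range.mp hi)
      have h : n + 1 - i = (n - i) + 1 := by omega
      rw [h, ← iteratedDeriv_succ', mul_assoc]
    rw [key2, eS1, eS2, add_comm]

theorem ngsp_factorial_moment_recursion (k : ℕ) (Λ T : ℕ → ℝ)
    (hΛ : ∀ j, 0 ≤ Λ j) (hT : ∀ j, 0 ≤ T j)
    (G : ℝ → ℝ)
    (hG : G = fun u : ℝ => Real.exp (∑ j ∈ Finset.Icc 1 k,
        (Λ j * (u ^ (j : ℤ) - 1) + T j * (u ^ (-(j : ℤ)) - 1))))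
    (r : ℕ) (hr : 1 ≤ r) :
    iteratedDeriv r G 1 =
      ∑ m ∈ Finset.range r, ((r - 1).choose m : ℝ) * iteratedDeriv m G 1 *
        (∑ j ∈ Finset.Icc 1 k,
          (Λ j * fallingFactorial (j : ℝ) (r - m) + T j * fallingFactorial (-(j : ℝ)) (r - m))) := by
  subst hG
  set s : Set ℝ := Set.Ioi 0 with hs_def
  have hs : IsOpen s := isOpen_Ioi
  have h1s : (1 : ℝ) ∈ s := by simp [hs_def, Set.mem_Ioi]
  set f0 : ℝ → ℝ := fun u => ∑ j ∈ Finset.Icc 1 k,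
    (Λ j * (u ^ (j : ℤ) - 1) + T j * (u ^ (-(j : ℤ)) - 1)) with hf0_def
  set G : ℝ → ℝ := fun u => Real.exp (f0 u) with hG_def
  -- smoothness of f0 and G on s
  have hterm : ∀ j : ℕ, ContDiffOn ℝ ⊤
      (fun u : ℝ => Λ j * (u ^ (j : ℤ) - 1) + T j * (u ^ (-(j : ℤ)) - 1)) s := by
    intro j
    exact (contDiffOn_const.mul ((contDiffOn_zpow_Ioi (j : ℤ)).sub contDiffOn_const)).add
      (contDiffOn_const.mul ((contDiffOn_zpow_Ioi (-(j : ℤ))).sub contDiffOn_const))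
  have hf0 : ContDiffOn ℝ ⊤ f0 s := ContDiffOn.sum fun j _ => hterm j
  have hGc : ContDiffOn ℝ ⊤ G s := Real.contDiff_exp.comp_contDiffOn hf0
  -- the logarithmic derivative g0
  set g0 : ℝ → ℝ := fun u => ∑ j ∈ Finset.Icc 1 k,
    (Λ j * (((j : ℤ) : ℝ) * u ^ ((j : ℤ) - 1)) +
      T j * (((-(j : ℤ) : ℤ) : ℝ) * u ^ (-(j : ℤ) - 1))) with hg0_def
  have hg0term : ∀ j : ℕ, ContDiffOn ℝ ⊤
      (fun u : ℝ => Λ j * (((j : ℤ) : ℝ) * u ^ ((j : ℤ) - 1)) +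
        T j * (((-(j : ℤ) : ℤ) : ℝ) * u ^ (-(j : ℤ) - 1))) s := by
    intro j
    exact (contDiffOn_const.mul (contDiffOn_const.mul (contDiffOn_zpow_Ioi ((j : ℤ) - 1)))).add
      (contDiffOn_const.mul (contDiffOn_const.mul (contDiffOn_zpow_Ioi (-(j : ℤ) - 1))))
  have hg0c : ContDiffOn ℝ ⊤ g0 s := ContDiffOn.sum fun j _ => hg0term j
  -- derivative of f0 and G on s
  have hfd : ∀ y ∈ s, HasDerivAt f0 (g0 y) y := by
    intro y hy
    have hy0 : y ≠ 0 := ne_of_gt hy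
    exact HasDerivAt.fun_sum fun (j : ℕ) _ =>
      (((hasDerivAt_zpow (j : ℤ) y (Or.inl hy0)).sub_const 1).const_mul (Λ j)).add
        (((hasDerivAt_zpow (-(j : ℤ)) y (Or.inl hy0)).sub_const 1).const_mul (T j))
  have hGd : ∀ y ∈ s, HasDerivAt G (g0 y * G y) y := by
    intro y hy
    have := (hfd y hy).exp
    simpa [hG_def, mul_comm] using this
  have hEq : deriv G =ᶠ[𝓝 (1 : ℝ)] fun u => g0 u * G u := by
    filter_upwards [hs.mem_nhds h1s] with y hy
    exact (hGd y hy).deriv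
  -- iterated derivatives of g0 at 1
  have hg0iter : ∀ b : ℕ, iteratedDeriv b g0 1 =
      ∑ j ∈ Finset.Icc 1 k,
        (Λ j * fallingFactorial (j : ℝ) (b + 1) + T j * fallingFactorial (-(j : ℝ)) (b + 1)) := by
    intro b
    rw [hg0_def]
    rw [my_iteratedDeriv_sum hs h1s b _ _ (fun j _ => hg0term j)]
    refine Finset.sum_congr rfl fun j _ => ?_
    rw [my_iteratedDeriv_add hs h1s b
        (contDiffOn_const.mul (contDiffOn_const.mul (contDiffOn_zpow_Ioi ((j : ℤ) - 1))))
        (contDiffOn_const.mul (contDiffOn_const.mul (contDiffOn_zpow_Ioi (-(j : ℤ) - 1)))),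
      my_iteratedDeriv_const_mul hs h1s b (Λ j)
        (contDiffOn_const.mul (contDiffOn_zpow_Ioi ((j : ℤ) - 1))),
      my_iteratedDeriv_const_mul hs h1s b (T j)
        (contDiffOn_const.mul (contDiffOn_zpow_Ioi (-(j : ℤ) - 1))),
      my_iteratedDeriv_const_mul hs h1s b _ (contDiffOn_zpow_Ioi ((j : ℤ) - 1)),
      my_iteratedDeriv_const_mul hs h1s b _ (contDiffOn_zpow_Ioi (-(j : ℤ) - 1)),
      iteratedDeriv_zpow_one, iteratedDeriv_zpow_one,
      fallingFactorial_succ_left, fallingFactorial_succ_left]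
    have e1 : (∏ i ∈ Finset.range b, ((((j : ℤ) - 1 : ℤ) : ℝ) - i))
        = ∏ i ∈ Finset.range b, ((j : ℝ) - 1 - i) :=
      Finset.prod_congr rfl fun i _ => by push_cast; ring
    have e2 : (∏ i ∈ Finset.range b, (((-(j : ℤ) - 1 : ℤ) : ℝ) - i))
        = ∏ i ∈ Finset.range b, (-(j : ℝ) - 1 - i) :=
      Finset.prod_congr rfl fun i _ => by push_cast; ring
    rw [e1, e2]
    push_cast
    ring
  -- main computation
  obtain ⟨n, rfl⟩ : ∃ n, r = n + 1 := ⟨r - 1, by omega⟩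
  have step1 : iteratedDeriv (n + 1) G 1
      = iteratedDeriv n (fun u => g0 u * G u) 1 := by
    rw [iteratedDeriv_succ']
    exact hEq.iteratedDeriv_eq n
  rw [step1, my_leibniz hs n g0 G hg0c hGc 1 h1s]
  have reflect := Finset.sum_range_reflect
    (fun i => (n.choose i : ℝ) * iteratedDeriv i g0 1 * iteratedDeriv (n - i) G 1) (n + 1)
  rw [← reflect]
  refine Finset.sum_congr rfl fun m hm => ?_
  have hmn : m ≤ n := Nat.lt_succ_iff.mp (Finset.mem_range.mp hm)
  have h1 : n + 1 - 1 - m = n - m := by omega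
  have h2 : n - (n - m) = m := Nat.sub_sub_self hmn
  have h3 : n.choose (n - m) = n.choose m := Nat.choose_symm hmn
  have h4 : n + 1 - m = (n - m) + 1 := by omega
  have h5 : n + 1 - 1 = n := by omega
  rw [h1, h2, h3, hg0iter (n - m), h5, h4]
  ring
end

section
/- Let F̃_n(t) = (Λ(t))^{nα} E_{α, nα+1}^{n}(−(Λ(t))^α) for n ≥ 0 with F̃_0(t) = 1. Then for all n ≥ 0, F̃_n(t) − F̃_{n+1}(t) = (Λ(t))^{nα} E_{α, nα+1}^{n+1}(−(Λ(t))^α), which is the pmf p̃(n,t) of the non-homogeneous time fractional Poisson process N(Y_α(Λ(t))). -/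
open scoped Nat

/-- Three-parameter (Prabhakar) Mittag-Leffler function. -/
noncomputable def prabhakar (α β δ z : ℝ) : ℝ :=
  ∑' n : ℕ, (∏ i ∈ Finset.range n, (δ + i)) * z ^ n / ((n ! : ℝ) * Real.Gamma (α * n + β))

open Filter Finset

/-- Gautschi-type inequality from log-convexity of `Γ`. -/
lemma gautschi_aux {α x : ℝ} (hα0 : 0 < α) (hα1 : α ≤ 1) (hx : 0 < x) :
    x * Real.Gamma x ≤ (x + α) ^ (1 - α) * Real.Gamma (x + α) := by
  have hxα : (0:ℝ) < x + α := by linarith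
  have hxα1 : (0:ℝ) < x + 1 + α := by linarith
  have hc := Real.convexOn_log_Gamma.2 (Set.mem_Ioi.2 hxα) (Set.mem_Ioi.2 hxα1)
    hα0.le (by linarith : (0:ℝ) ≤ 1 - α) (by ring)
  have harg : α • (x + α) + (1 - α) • (x + 1 + α) = x + 1 := by
    simp only [smul_eq_mul]; ring
  rw [harg] at hc
  simp only [Function.comp_apply] at hc
  have h1 : Real.Gamma (x + 1) = x * Real.Gamma x := Real.Gamma_add_one hx.ne'
  have h2 : Real.Gamma (x + 1 + α) = (x + α) * Real.Gamma (x + α) := by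
    rw [show x + 1 + α = (x + α) + 1 by ring, Real.Gamma_add_one hxα.ne']
  have hΓx : 0 < Real.Gamma x := Real.Gamma_pos_of_pos hx
  have hΓxα : 0 < Real.Gamma (x + α) := Real.Gamma_pos_of_pos hxα
  rw [h1, h2] at hc
  have hlog : Real.log (x * Real.Gamma x)
      ≤ Real.log ((x + α) ^ (1 - α) * Real.Gamma (x + α)) := by
    rw [Real.log_mul (by positivity) hΓxα.ne', Real.log_rpow hxα]
    rw [Real.log_mul hxα.ne' hΓxα.ne'] at hc
    simp only [smul_eq_mul] at hc
    nlinarith [hc]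
  exact (Real.log_le_log_iff (by positivity) (by positivity)).1 hlog

set_option maxHeartbeats 1000000 in
lemma summable_prabhakar_terms {α : ℝ} (hα0 : 0 < α) (hα1 : α ≤ 1) (β δ z : ℝ)
    (hβ : 1 ≤ β) (hδ : 0 ≤ δ) :
    Summable (fun m : ℕ => (∏ i ∈ Finset.range m, (δ + (i:ℝ))) * z ^ m /
      ((m ! : ℝ) * Real.Gamma (α * m + β))) := by
  set a : ℕ → ℝ := fun m => (∏ i ∈ Finset.range m, (δ + (i:ℝ))) * z ^ m /
      ((m ! : ℝ) * Real.Gamma (α * m + β)) with ha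
  apply summable_of_ratio_norm_eventually_le (r := 1/2) (by norm_num)
  set C : ℝ := 4 * (δ + 1) * |z| + 1 with hC
  have hC1 : (1:ℝ) ≤ C := by
    rw [hC]
    nlinarith [abs_nonneg z, hδ]
  set R : ℝ := max α (C ^ (α⁻¹)) with hR
  rw [eventually_atTop]
  refine ⟨⌈(R + 1) / α⌉₊, fun m hm => ?_⟩
  set x : ℝ := α * m + β with hxdef
  have hx1 : (1:ℝ) ≤ x := by
    have : (0:ℝ) ≤ α * m := by positivity
    simp only [hxdef]; linarith
  have hx : (0:ℝ) < x := by linarith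
  have hxR : R + 1 ≤ x := by
    have h1 : (R + 1) / α ≤ (⌈(R + 1) / α⌉₊ : ℝ) := Nat.le_ceil _
    have h2 : ((⌈(R + 1) / α⌉₊ : ℕ) : ℝ) ≤ (m : ℝ) := by exact_mod_cast hm
    have h3 : (R + 1) / α ≤ (m : ℝ) := le_trans h1 h2
    have h4 : R + 1 ≤ α * m := by
      rw [div_le_iff₀ hα0] at h3; linarith [mul_comm α (m:ℝ)]
    simp only [hxdef]; linarith
  have hRα : α ≤ R := le_max_left _ _
  have hRC : C ^ (α⁻¹) ≤ R := le_max_right _ _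
  have hy : (0:ℝ) < x + α := by linarith
  have hΓx : 0 < Real.Gamma x := Real.Gamma_pos_of_pos hx
  have hΓy : 0 < Real.Gamma (x + α) := Real.Gamma_pos_of_pos hy
  -- (x+α)^α ≥ C
  have hyα : C ≤ (x + α) ^ α := by
    have h0 : (0:ℝ) < C := by linarith
    have h1 : C ^ (α⁻¹) ≤ x + α := by linarith
    have h2 : (C ^ (α⁻¹)) ^ α ≤ (x + α) ^ α :=
      Real.rpow_le_rpow (by positivity) h1 hα0.le
    rw [← Real.rpow_mul h0.le, inv_mul_cancel₀ hα0.ne', Real.rpow_one] at h2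
    exact h2
  -- key'' : 2(δ+1)|z| (x+α)^{1-α} ≤ x
  have hy1α : (x + α) ^ (1 - α) = (x + α) / (x + α) ^ α := by
    rw [Real.rpow_sub hy, Real.rpow_one]
  have hCpos : (0:ℝ) < C := by linarith
  have hyαpos : (0:ℝ) < (x + α) ^ α := Real.rpow_pos_of_pos hy α
  have hkey2 : 2 * (δ + 1) * |z| * ((x + α) ^ (1 - α)) ≤ x := by
    rw [hy1α]
    have hdiv : (x + α) / (x + α) ^ α ≤ (x + α) / C :=
      div_le_div_of_nonneg_left hy.le hCpos hyα
    have hxα2 : x + α ≤ 2 * x := by linarith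
    have h5 : 2 * (δ + 1) * |z| * ((x + α) / (x + α) ^ α)
        ≤ 2 * (δ + 1) * |z| * ((x + α) / C) := by
      apply mul_le_mul_of_nonneg_left hdiv (by positivity)
    have h6 : 2 * (δ + 1) * |z| * ((x + α) / C) ≤ x := by
      rw [mul_div_assoc', div_le_iff₀ hCpos]
      nlinarith [abs_nonneg z, hx.le]
    linarith
  -- key' : (δ+1)|z| Γ x ≤ 1/2 Γ(x+α)
  have hga := gautschi_aux hα0 hα1 hx
  have hkey1 : (δ + 1) * |z| * Real.Gamma x ≤ 1/2 * Real.Gamma (x + α) := by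
    have h7 := mul_le_mul_of_nonneg_left hga (by positivity : (0:ℝ) ≤ (δ + 1) * |z|)
    have h8 := mul_le_mul_of_nonneg_right hkey2 hΓy.le
    nlinarith [hx]
  -- key : (δ+m)|z| Γ x ≤ 1/2 (m+1) Γ(x+α)
  have hkey : (δ + m) * |z| * Real.Gamma x ≤ 1/2 * ((m:ℝ) + 1) * Real.Gamma (x + α) := by
    have hδm : δ + (m:ℝ) ≤ (δ + 1) * ((m:ℝ) + 1) := by nlinarith [Nat.cast_nonneg (α := ℝ) m]
    have h9 : (δ + m) * |z| * Real.Gamma x ≤ (δ + 1) * ((m:ℝ) + 1) * |z| * Real.Gamma x := by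
      apply mul_le_mul_of_nonneg_right _ hΓx.le
      exact mul_le_mul_of_nonneg_right hδm (abs_nonneg z)
    have h10 := mul_le_mul_of_nonneg_left hkey1 (by positivity : (0:ℝ) ≤ (m:ℝ) + 1)
    nlinarith
  -- now compute the norms
  set P : ℝ := ∏ i ∈ Finset.range m, (δ + (i:ℝ)) with hP
  have hPnn : 0 ≤ P := Finset.prod_nonneg fun i _ => by positivity
  have hfm : ((m !: ℕ) : ℝ) ≠ 0 := Nat.cast_ne_zero.2 (Nat.factorial_ne_zero m)
  have hfmpos : (0:ℝ) < (m ! : ℝ) := by positivity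
  have harg : α * ((m+1 : ℕ) : ℝ) + β = x + α := by push_cast; simp only [hxdef]; ring
  have e1 : a (m+1) = (P * (δ + m)) * (z ^ m * z) / ((((m:ℝ)+1) * (m ! : ℝ)) * Real.Gamma (x + α)) := by
    simp only [ha]
    rw [harg, Finset.prod_range_succ, pow_succ, Nat.factorial_succ]
    push_cast
    ring
  have e0 : a m = P * z ^ m / ((m ! : ℝ) * Real.Gamma x) := by
    simp only [ha, hP, hxdef]
  rw [e1, e0, Real.norm_eq_abs, Real.norm_eq_abs, abs_div, abs_div]
  simp only [abs_mul, abs_pow]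
  rw [abs_of_nonneg hPnn, abs_of_nonneg (show (0:ℝ) ≤ δ + (m:ℝ) by positivity),
    abs_of_pos hΓy, abs_of_pos hΓx, abs_of_pos hfmpos,
    abs_of_pos (show (0:ℝ) < (m:ℝ) + 1 by positivity)]
  rw [show (1:ℝ)/2 * (P * |z| ^ m / ((m ! : ℝ) * Real.Gamma x))
      = (P * |z| ^ m) / (2 * ((m ! : ℝ) * Real.Gamma x)) by ring]
  rw [div_le_div_iff₀ (by positivity) (by positivity)]
  have hint := mul_le_mul_of_nonneg_left hkey
    (by positivity : (0:ℝ) ≤ 2 * P * |z| ^ m * (m ! : ℝ))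
  nlinarith [hint]

set_option maxHeartbeats 1000000 in
theorem ntfpp_pmf_from_arrival_times (α : ℝ) (hα : α ∈ Set.Ioc (0 : ℝ) 1)
    (Λ : ℝ) (hΛ : 0 ≤ Λ)
    (F : ℕ → ℝ)
    (hF : ∀ n : ℕ, F n = Λ ^ ((n : ℝ) * α) * prabhakar α ((n : ℝ) * α + 1) (n : ℝ) (-(Λ ^ α)))
    (n : ℕ) :
    F n - F (n + 1) =
      Λ ^ ((n : ℝ) * α) * prabhakar α ((n : ℝ) * α + 1) ((n : ℝ) + 1) (-(Λ ^ α))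
    ∧ Λ ^ ((n : ℝ) * α) * prabhakar α ((n : ℝ) * α + 1) ((n : ℝ) + 1) (-(Λ ^ α))
      = Λ ^ ((n : ℝ) * α) / (n ! : ℝ) *
          ∑' m : ℕ, (((m + n)! : ℝ) / (m ! : ℝ)) * (-(Λ ^ α)) ^ m /
            Real.Gamma (((m : ℝ) + n) * α + 1) := by
  obtain ⟨hα0, hα1⟩ := hα
  set z : ℝ := -(Λ ^ α) with hz
  set f : ℕ → ℝ := fun m => (∏ i ∈ Finset.range m, ((n:ℝ) + (i:ℝ))) * z ^ m /
      ((m ! : ℝ) * Real.Gamma (α * m + ((n:ℝ) * α + 1))) with hfdef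
  set g : ℕ → ℝ := fun m => (∏ i ∈ Finset.range m, ((n:ℝ) + 1 + (i:ℝ))) * z ^ m /
      ((m ! : ℝ) * Real.Gamma (α * m + (((n:ℝ) + 1) * α + 1))) with hgdef
  set h : ℕ → ℝ := fun m => (∏ i ∈ Finset.range m, ((n:ℝ) + 1 + (i:ℝ))) * z ^ m /
      ((m ! : ℝ) * Real.Gamma (α * m + ((n:ℝ) * α + 1))) with hhdef
  have Sf : Summable f :=
    summable_prabhakar_terms hα0 hα1 ((n:ℝ) * α + 1) (n:ℝ) z
      (by nlinarith [Nat.cast_nonneg (α := ℝ) n]) (Nat.cast_nonneg n)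
  have Sg : Summable g := by
    have := summable_prabhakar_terms hα0 hα1 (((n:ℝ) + 1) * α + 1) ((n:ℝ) + 1) z
      (by nlinarith [Nat.cast_nonneg (α := ℝ) n]) (by positivity)
    exact this
  have Sh : Summable h := by
    have := summable_prabhakar_terms hα0 hα1 ((n:ℝ) * α + 1) ((n:ℝ) + 1) z
      (by nlinarith [Nat.cast_nonneg (α := ℝ) n]) (by positivity)
    exact this
  have hw0 : h 0 - f 0 = 0 := by simp [hhdef, hfdef]
  have hw2 : ∀ m : ℕ, h (m+1) - f (m+1) = z * g m := by
    intro m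
    have hΓpos : 0 < Real.Gamma (α * (m:ℝ) + (((n:ℝ) + 1) * α + 1)) :=
      Real.Gamma_pos_of_pos (by positivity)
    have harg : α * (((m+1 : ℕ)):ℝ) + ((n:ℝ) * α + 1)
        = α * (m:ℝ) + (((n:ℝ) + 1) * α + 1) := by push_cast; ring
    have hp2 : ∏ i ∈ Finset.range (m+1), ((n:ℝ) + (i:ℝ))
        = (∏ i ∈ Finset.range m, ((n:ℝ) + 1 + (i:ℝ))) * n := by
      rw [Finset.prod_range_succ']
      push_cast
      rw [add_zero]
      congr 1
      exact Finset.prod_congr rfl fun i _ => by ring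
    simp only [hfdef, hgdef, hhdef]
    rw [harg, Finset.prod_range_succ, hp2, Nat.factorial_succ]
    have hfm : ((m !: ℕ) : ℝ) ≠ 0 := Nat.cast_ne_zero.2 (Nat.factorial_ne_zero m)
    push_cast
    field_simp
    ring
  have hsub : ∑' m, (h m - f m) = z * ∑' m, g m := by
    rw [← tsum_mul_left]
    refine tsum_eq_tsum_of_ne_zero_bij (fun x => (x : ℕ) + 1) ?_ ?_ ?_
    · intro a b hab
      simpa [Subtype.ext_iff] using hab
    · intro m hm
      match m with
      | 0 => exact absurd hw0 hm
      | k+1 =>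
        have hk : z * g k ≠ 0 := by rw [← hw2 k]; exact hm
        exact ⟨⟨k, hk⟩, rfl⟩
    · intro x
      exact hw2 x
  have hdiff : (∑' m, h m) = (∑' m, f m) - Λ ^ α * ∑' m, g m := by
    have e := Summable.tsum_sub Sh Sf
    rw [hsub] at e
    have hzg : z * ∑' m, g m = -(Λ ^ α * ∑' m, g m) := by rw [hz]; ring
    rw [hzg] at e
    linarith
  have hpr1 : prabhakar α ((n:ℝ) * α + 1) (n:ℝ) z = ∑' m, f m := by
    simp only [prabhakar, hfdef]
  have hpr2 : prabhakar α ((n:ℝ) * α + 1) ((n:ℝ) + 1) z = ∑' m, h m := by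
    simp only [prabhakar, hhdef]
  have hpr3 : prabhakar α (((n:ℝ) + 1) * α + 1) ((n:ℝ) + 1) z = ∑' m, g m := by
    simp only [prabhakar, hgdef]
  have hΛpow : Λ ^ (((n:ℝ) + 1) * α) = Λ ^ ((n:ℝ) * α) * Λ ^ α := by
    rw [show ((n:ℝ) + 1) * α = (n:ℝ) * α + α by ring,
      Real.rpow_add' hΛ (by positivity : (n:ℝ) * α + α ≠ 0)]
  have hF1 := hF (n + 1)
  push_cast at hF1
  have hc1 : F n - F (n + 1) = Λ ^ ((n:ℝ) * α) * prabhakar α ((n:ℝ) * α + 1) ((n:ℝ) + 1) z := by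
    rw [hF n, hF1, hpr1, hpr2, hpr3, hΛpow, hdiff]
    ring
  refine ⟨hc1, ?_⟩
  have hfact2 : ∀ m : ℕ, (((m + n)! : ℕ) : ℝ)
      = (n ! : ℝ) * ∏ i ∈ Finset.range m, ((n:ℝ) + 1 + (i:ℝ)) := by
    intro m
    induction m with
    | zero => simp
    | succ k ih =>
      have hs : k + 1 + n = (k + n) + 1 := by omega
      rw [hs, Nat.factorial_succ, Finset.prod_range_succ]
      push_cast
      rw [ih]
      ring
  have hb : ∀ m : ℕ, (((m + n)! : ℕ) : ℝ) / (m ! : ℝ) * z ^ m /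
      Real.Gamma (((m : ℝ) + n) * α + 1) = (n ! : ℝ) * h m := by
    intro m
    have harg : ((m : ℝ) + n) * α + 1 = α * (m:ℝ) + ((n:ℝ) * α + 1) := by ring
    rw [hfact2 m, harg]
    simp only [hhdef]
    ring
  rw [hpr2, tsum_congr hb, tsum_mul_left]
  have hnf : ((n ! : ℕ) : ℝ) ≠ 0 := Nat.cast_ne_zero.2 (Nat.factorial_ne_zero n)
  field_simp
end

section
/- Let G_j ~ Geometric with success probability p = Λ_j(t)/Λ(t) (support {1,2,...}), and for n ≥ 1 set F̃_n(t) = (Λ(t))^{nα} E_{α,nα+1}^n(−(Λ(t))^α). Then ∑_{n=1}^∞ F̃_n(t) p (1−p)^{n−1} = Λ_j(t)(Λ(t))^{α−1} E_{α,α+1}(−Λ_j(t)(Λ(t))^{α−1}). -/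
open scoped Nat

open Finset Filter

private lemma prod_choose (n k : ℕ) :
    (∏ i ∈ Finset.range k, (((n + 1 : ℕ) : ℝ) + i)) = ((n + k).choose k : ℝ) * (k ! : ℝ) := by
  induction k with
  | zero => simp
  | succ k ih =>
      rw [Finset.prod_range_succ, ih]
      have hc : ((n + k + 1) * ((n + k).choose k) : ℝ)
          = ((n + k + 1).choose (k + 1) : ℝ) * (k + 1) := by
        exact_mod_cast congrArg (Nat.cast (R := ℝ)) (Nat.add_one_mul_choose_eq (n + k) k)
      have he : n + (k + 1) = (n + k) + 1 := by omega
      rw [he]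
      push_cast [Nat.factorial_succ] at hc ⊢
      nlinarith [hc]

private lemma gamma_lb {α y : ℝ} (hα : 0 < α) (hy : 2 ≤ y) :
    Real.Gamma y * (y - 1) ^ α ≤ Real.Gamma (y + α) := by
  have h0 : (0 : ℝ) < y - 1 := by linarith
  have hs := Real.convexOn_log_Gamma.slope_mono_adjacent
    (x := y - 1) (y := y) (z := y + α)
    (Set.mem_Ioi.mpr h0) (Set.mem_Ioi.mpr (by linarith)) (by linarith) (by linarith)
  simp only [Function.comp] at hs
  have e1 : y - (y - 1) = 1 := by ring
  have e2 : y + α - y = α := by ring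
  rw [e1, e2, div_one] at hs
  have hΓ1 : 0 < Real.Gamma (y - 1) := Real.Gamma_pos_of_pos h0
  have hΓy : 0 < Real.Gamma y := Real.Gamma_pos_of_pos (by linarith)
  have hΓ2 : 0 < Real.Gamma (y + α) := Real.Gamma_pos_of_pos (by linarith)
  have hgy1 : Real.Gamma y = (y - 1) * Real.Gamma (y - 1) := by
    have := Real.Gamma_add_one (ne_of_gt h0)
    rwa [sub_add_cancel] at this
  have hlog : Real.log (Real.Gamma y) - Real.log (Real.Gamma (y - 1)) = Real.log (y - 1) := by
    rw [hgy1, Real.log_mul (ne_of_gt h0) (ne_of_gt hΓ1)]; ring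
  rw [hlog] at hs
  have h2 : α * Real.log (y - 1)
      ≤ Real.log (Real.Gamma (y + α)) - Real.log (Real.Gamma y) := by
    rw [le_div_iff₀ hα] at hs; linarith
  have hfin : Real.log (Real.Gamma y * (y - 1) ^ α) ≤ Real.log (Real.Gamma (y + α)) := by
    rw [Real.log_mul (ne_of_gt hΓy) (by positivity), Real.log_rpow h0]
    linarith
  exact (Real.log_le_log_iff (by positivity) hΓ2).mp hfin

private lemma summable_ml {α c x : ℝ} (hα : 0 < α) (hc : 0 < c) (hx : 0 < x) :
    Summable fun m : ℕ => x ^ m / Real.Gamma (α * m + c) := by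
  have hB : (0 : ℝ) ≤ (2 * x + 1) ^ (α⁻¹) := Real.rpow_nonneg (by linarith) _
  set M : ℝ := max 2 ((2 * x + 1) ^ (α⁻¹)) + 2 with hM
  have htend : Tendsto (fun n : ℕ => α * n + c) atTop atTop := by
    apply tendsto_atTop_add_const_right
    exact Tendsto.const_mul_atTop hα tendsto_natCast_atTop_atTop
  refine summable_of_ratio_norm_eventually_le (r := 1 / 2) (by norm_num) ?_
  filter_upwards [htend.eventually_ge_atTop M] with n hn
  have hΓy : 0 < Real.Gamma (α * n + c) := Real.Gamma_pos_of_pos (by positivity)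
  have hy2 : (2 : ℝ) ≤ α * n + c := by
    have : (2 : ℝ) ≤ M := by rw [hM]; have := le_max_left 2 ((2 * x + 1) ^ (α⁻¹)); linarith
    linarith
  have h2x : 2 * x ≤ (α * n + c - 1) ^ α := by
    have hble : (2 * x + 1 : ℝ) ^ (α⁻¹) ≤ α * n + c - 1 := by
      have := le_max_right 2 ((2 * x + 1) ^ (α⁻¹)); rw [hM] at hn; linarith
    have := Real.rpow_le_rpow hB hble hα.le
    rw [← Real.rpow_mul (by linarith : (0:ℝ) ≤ 2 * x + 1), inv_mul_cancel₀ (ne_of_gt hα),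
      Real.rpow_one] at this
    linarith
  have hgam := gamma_lb hα hy2
  have key : Real.Gamma (α * n + c) * (2 * x) ≤ Real.Gamma (α * n + c + α) :=
    le_trans (mul_le_mul_of_nonneg_left h2x hΓy.le) hgam
  have hΓ2 : 0 < Real.Gamma (α * n + c + α) := Real.Gamma_pos_of_pos (by positivity)
  have harg : α * ((n + 1 : ℕ) : ℝ) + c = α * n + c + α := by push_cast; ring
  rw [Real.norm_eq_abs, Real.norm_eq_abs, harg,
    abs_of_pos (by positivity), abs_of_pos (by positivity)]
  calc x ^ (n + 1) / Real.Gamma (α * n + c + α)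
      ≤ x ^ (n + 1) / (Real.Gamma (α * n + c) * (2 * x)) := by
        apply div_le_div_of_nonneg_left (by positivity) (by positivity) key
    _ = 1 / 2 * (x ^ n / Real.Gamma (α * n + c)) := by
        rw [pow_succ]; field_simp

/-- Auxiliary two-index family. -/
noncomputable def gaux (α p x s : ℝ) (nk : ℕ × ℕ) : ℝ :=
  p * (1 - p) ^ nk.1 * ((nk.1 + nk.2).choose nk.2 : ℝ) * s ^ nk.2 *
    x ^ (nk.1 + nk.2 + 1) / Real.Gamma (α * ((nk.1 + nk.2 + 1 : ℕ) : ℝ) + 1)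

private lemma sum_antidiag (α p x s : ℝ) (m : ℕ) :
    ∑ ij ∈ Finset.HasAntidiagonal.antidiagonal m, gaux α p x s ij
      = p * ((1 - p) + s) ^ m * x ^ (m + 1)
          / Real.Gamma (α * ((m + 1 : ℕ) : ℝ) + 1) := by
  rw [Finset.Nat.sum_antidiagonal_eq_sum_range_succ_mk]
  have hterm : ∀ k ∈ Finset.range (m + 1), gaux α p x s (k, m - k)
      = p * x ^ (m + 1) / Real.Gamma (α * ((m + 1 : ℕ) : ℝ) + 1)
          * ((1 - p) ^ k * s ^ (m - k) * (m.choose k : ℝ)) := by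
    intro k hk
    have hk' : k ≤ m := Nat.lt_succ_iff.mp (Finset.mem_range.mp hk)
    have h1 : k + (m - k) = m := Nat.add_sub_cancel' hk'
    simp only [gaux]
    rw [h1, Nat.choose_symm hk']
    ring
  rw [Finset.sum_congr rfl hterm, ← Finset.mul_sum, ← add_pow]
  ring

private lemma abs_gaux {α p x : ℝ} (hα : 0 < α) (hp0 : 0 ≤ p) (hp1 : p ≤ 1) (hx : 0 ≤ x)
    (nk : ℕ × ℕ) : |gaux α p x (-1) nk| = gaux α p x 1 nk := by
  have hΓ : 0 < Real.Gamma (α * ((nk.1 + nk.2 + 1 : ℕ) : ℝ) + 1) :=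
    Real.Gamma_pos_of_pos (by positivity)
  unfold gaux
  rw [abs_div, abs_of_pos hΓ, abs_mul, abs_mul, abs_mul, abs_mul, abs_pow, abs_pow, abs_pow,
    abs_neg, abs_one, one_pow, abs_of_nonneg hp0,
    abs_of_nonneg (by linarith : (0:ℝ) ≤ 1 - p), abs_of_nonneg hx, Nat.abs_cast]

private lemma gaux_nonneg {α p x : ℝ} (hα : 0 < α) (hp0 : 0 ≤ p) (hp1 : p ≤ 1) (hx : 0 ≤ x)
    (nk : ℕ × ℕ) : 0 ≤ gaux α p x 1 nk := by
  unfold gaux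
  have h1 : (0:ℝ) ≤ 1 - p := by linarith
  have hΓ : 0 < Real.Gamma (α * ((nk.1 + nk.2 + 1 : ℕ) : ℝ) + 1) :=
    Real.Gamma_pos_of_pos (by positivity)
  exact div_nonneg (mul_nonneg (mul_nonneg (mul_nonneg (mul_nonneg hp0
    (pow_nonneg h1 _)) (Nat.cast_nonneg _)) (pow_nonneg zero_le_one _))
    (pow_nonneg hx _)) hΓ.le

private lemma summable_gaux_one {α p x : ℝ} (hα : 0 < α) (hp0 : 0 ≤ p) (hp1 : p ≤ 1)
    (hx : 0 < x) : Summable (gaux α p x 1) := by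
  rw [← Finset.HasAntidiagonal.sigmaAntidiagonalEquivProd.summable_iff]
  refine (summable_sigma_of_nonneg
    (f := gaux α p x 1 ∘ ⇑Finset.HasAntidiagonal.sigmaAntidiagonalEquivProd)
    (fun σ => gaux_nonneg hα hp0 hp1 hx.le _)).mpr ⟨fun m => Summable.of_finite, ?_⟩
  have hfib : ∀ m : ℕ,
      (∑' j : { y // y ∈ Finset.HasAntidiagonal.antidiagonal m }, gaux α p x 1 (j : ℕ × ℕ))
        = p * ((1 - p) + 1) ^ m * x ^ (m + 1)
            / Real.Gamma (α * ((m + 1 : ℕ) : ℝ) + 1) := fun m => by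
    rw [Finset.tsum_subtype (Finset.HasAntidiagonal.antidiagonal m) (gaux α p x 1), sum_antidiag]
  refine Summable.congr ?_ (fun m => (hfib m).symm)
  have h2 : (0:ℝ) < ((1 - p) + 1) * x := by nlinarith
  have h := (summable_ml hα (show (0:ℝ) < α + 1 by linarith) h2).mul_left (p * x)
  refine h.congr fun m => ?_
  have harg : α * ((m + 1 : ℕ) : ℝ) + 1 = α * m + (α + 1) := by push_cast; ring
  rw [harg, mul_pow, pow_succ]
  ring

private lemma summable_gaux_neg {α p x : ℝ} (hα : 0 < α) (hp0 : 0 ≤ p) (hp1 : p ≤ 1)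
    (hx : 0 < x) : Summable (gaux α p x (-1)) := by
  have h := (summable_gaux_one hα hp0 hp1 hx).congr
    (fun nk => (abs_gaux hα hp0 hp1 hx.le nk).symm)
  exact h.of_abs

private lemma tsum_gaux {α p x : ℝ} (hα : 0 < α) (hp0 : 0 ≤ p) (hp1 : p ≤ 1) (hx : 0 < x) :
    ∑' nk : ℕ × ℕ, gaux α p x (-1) nk
      = ∑' m : ℕ, p * ((1 - p) + (-1)) ^ m * x ^ (m + 1)
          / Real.Gamma (α * ((m + 1 : ℕ) : ℝ) + 1) := by
  have hsum : Summable ((gaux α p x (-1)) ∘ Finset.HasAntidiagonal.sigmaAntidiagonalEquivProd) :=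
    Finset.HasAntidiagonal.sigmaAntidiagonalEquivProd.summable_iff.mpr (summable_gaux_neg hα hp0 hp1 hx)
  calc ∑' nk : ℕ × ℕ, gaux α p x (-1) nk
      = ∑' σ : (Σ m : ℕ, Finset.HasAntidiagonal.antidiagonal m),
          gaux α p x (-1) (Finset.HasAntidiagonal.sigmaAntidiagonalEquivProd σ) :=
        (Finset.HasAntidiagonal.sigmaAntidiagonalEquivProd.tsum_eq (gaux α p x (-1))).symm
    _ = ∑' (m : ℕ) (j : { y // y ∈ Finset.HasAntidiagonal.antidiagonal m }), gaux α p x (-1) (j : ℕ × ℕ) :=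
        Summable.tsum_sigma hsum
    _ = ∑' m : ℕ, p * ((1 - p) + (-1)) ^ m * x ^ (m + 1)
          / Real.Gamma (α * ((m + 1 : ℕ) : ℝ) + 1) := by
        refine tsum_congr fun m => ?_
        rw [Finset.tsum_subtype (Finset.HasAntidiagonal.antidiagonal m) (gaux α p x (-1)), sum_antidiag]

private lemma key (α p x : ℝ) (hα0 : 0 < α) (hp0 : 0 < p) (hp1 : p ≤ 1) (hx : 0 < x) :
    ∑' n : ℕ, (x ^ (n + 1) * prabhakar α (((n + 1 : ℕ) : ℝ) * α + 1) ((n + 1 : ℕ) : ℝ) (-x))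
        * p * (1 - p) ^ n
      = (p * x) * prabhakar α (α + 1) 1 (-(p * x)) := by
  have hstep1 : ∀ n : ℕ,
      (x ^ (n + 1) * prabhakar α (((n + 1 : ℕ) : ℝ) * α + 1) ((n + 1 : ℕ) : ℝ) (-x))
          * p * (1 - p) ^ n
        = ∑' k : ℕ, gaux α p x (-1) (n, k) := by
    intro n
    simp only [prabhakar]
    rw [← tsum_mul_left, ← tsum_mul_right, ← tsum_mul_right]
    refine tsum_congr fun k => ?_
    have hΓ : 0 < Real.Gamma (α * ((n + k + 1 : ℕ) : ℝ) + 1) :=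
      Real.Gamma_pos_of_pos (by positivity)
    have harg : α * (k : ℝ) + (((n + 1 : ℕ) : ℝ) * α + 1)
        = α * ((n + k + 1 : ℕ) : ℝ) + 1 := by push_cast; ring
    have hfac : ((k ! : ℕ) : ℝ) ≠ 0 := by positivity
    rw [prod_choose, harg]
    simp only [gaux]
    field_simp
    ring
  rw [tsum_congr hstep1, ← Summable.tsum_prod (summable_gaux_neg hα0 hp0.le hp1 hx),
    tsum_gaux hα0 hp0.le hp1 hx]
  simp only [prabhakar]
  rw [← tsum_mul_left]
  refine tsum_congr fun m => ?_
  have hΓ : 0 < Real.Gamma (α * (m : ℝ) + (α + 1)) := Real.Gamma_pos_of_pos (by positivity)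
  have harg : α * ((m + 1 : ℕ) : ℝ) + 1 = α * (m : ℝ) + (α + 1) := by push_cast; ring
  have hprodm : (∏ i ∈ Finset.range m, ((1 : ℝ) + (i : ℝ))) = (m ! : ℝ) := by
    have hc : (∏ i ∈ Finset.range m, ((1 : ℝ) + (i : ℝ)))
        = ∏ i ∈ Finset.range m, ((i + 1 : ℕ) : ℝ) :=
      Finset.prod_congr rfl fun i _ => by push_cast; ring
    rw [hc, ← Nat.cast_prod, Finset.prod_range_add_one_eq_factorial]
  have hfacm : ((m ! : ℕ) : ℝ) ≠ 0 := by positivity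
  rw [harg, hprodm]
  field_simp
  ring

theorem nhgfcp_first_jump_time (α : ℝ) (hα : α ∈ Set.Ioc (0 : ℝ) 1)
    (Λj Λ : ℝ) (h1 : 0 < Λj) (h2 : Λj ≤ Λ)
    (p : ℝ) (hp : p = Λj / Λ)
    (F : ℕ → ℝ)
    (hF : ∀ n : ℕ, F n = Λ ^ ((n : ℝ) * α) * prabhakar α ((n : ℝ) * α + 1) (n : ℝ) (-(Λ ^ α))) :
    ∑' n : ℕ, F (n + 1) * p * (1 - p) ^ n
      = Λj * Λ ^ (α - 1) * prabhakar α (α + 1) 1 (-(Λj * Λ ^ (α - 1))) := by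
  have hΛ : 0 < Λ := lt_of_lt_of_le h1 h2
  have hp0 : 0 < p := hp ▸ div_pos h1 hΛ
  have hp1 : p ≤ 1 := hp ▸ (div_le_one hΛ).mpr h2
  have hx : 0 < Λ ^ α := Real.rpow_pos_of_pos hΛ α
  have hmul : Λ ^ α = Λ * Λ ^ (α - 1) := by
    conv_lhs => rw [show α = 1 + (α - 1) by ring]
    rw [Real.rpow_add hΛ, Real.rpow_one]
  have hΛj : Λj * Λ ^ (α - 1) = p * Λ ^ α := by
    have hΛj' : Λj = p * Λ := by rw [hp]; field_simp
    rw [hmul, hΛj']; ring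
  calc ∑' n : ℕ, F (n + 1) * p * (1 - p) ^ n
      = ∑' n : ℕ, ((Λ ^ α) ^ (n + 1)
            * prabhakar α (((n + 1 : ℕ) : ℝ) * α + 1) ((n + 1 : ℕ) : ℝ) (-(Λ ^ α)))
          * p * (1 - p) ^ n := by
        refine tsum_congr fun n => ?_
        have hpow : Λ ^ (((n + 1 : ℕ) : ℝ) * α) = (Λ ^ α) ^ (n + 1) := by
          rw [mul_comm, Real.rpow_mul hΛ.le, Real.rpow_natCast]
        rw [hF (n + 1), hpow]
    _ = (p * Λ ^ α) * prabhakar α (α + 1) 1 (-(p * Λ ^ α)) :=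
        key α p (Λ ^ α) hα.1 hp0 hp1 hx
    _ = Λj * Λ ^ (α - 1) * prabhakar α (α + 1) 1 (-(Λj * Λ ^ (α - 1))) := by
        rw [hΛj]
end

section
/- Let M have compound representation M = ∑_{i=1}^N X_i where N has pmf p̃(n) = Λ^{nα} E^{n+1}_{α,nα+1}(−Λ^α) (NTFPP marginal with Λ = ∑_{j=1}^k Λ_j) and X_i are i.i.d., independent of N, with P(X_1 = j) = Λ_j/Λ for j = 1,...,k. Then for j ≥ 1, P(M = j) = ∑_{r=0}^{j} ∑ multinomial(r; α_1,...,α_k) ∏_{s=1}^k Λ_s^{α_s} · Λ^{−r(1−α)} E^{r+1}_{α, rα+1}(−Λ^α), where the inner sum is over nonnegative integers α_1,...,α_k with α_1+···+α_k = r and α_1 + 2α_2 + ··· + kα_k = j. -/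
open scoped Nat
open MeasureTheory ProbabilityTheory

open Finset


lemma sum_Icc_one_eq_sum_fin {M : Type*} [AddCommMonoid M] (k : ℕ) (F : ℕ → M) :
    ∑ v ∈ Finset.Icc 1 k, F v = ∑ s : Fin k, F ((s : ℕ) + 1) := by
  rw [show (∑ s : Fin k, F ((s : ℕ) + 1)) = ∑ i ∈ Finset.range k, F (i + 1) from
    Fin.sum_univ_eq_sum_range (fun i => F (i + 1)) k]
  refine Finset.sum_nbij' (fun v => v - 1) (fun i => i + 1) ?_ ?_ ?_ ?_ ?_
  · intro a ha; simp only [mem_Icc] at ha; simp only [mem_range]; omega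
  · intro a ha; simp only [mem_range] at ha; simp only [mem_Icc]; omega
  · intro a ha; simp only [mem_Icc] at ha; omega
  · intro a _; omega
  · intro a ha; simp only [mem_Icc] at ha; congr 1; omega

lemma prod_Icc_one_eq_prod_fin {M : Type*} [CommMonoid M] (k : ℕ) (F : ℕ → M) :
    ∏ v ∈ Finset.Icc 1 k, F v = ∏ s : Fin k, F ((s : ℕ) + 1) := by
  rw [show (∏ s : Fin k, F ((s : ℕ) + 1)) = ∏ i ∈ Finset.range k, F (i + 1) from
    Fin.prod_univ_eq_prod_range (fun i => F (i + 1)) k]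
  refine Finset.prod_nbij' (fun v => v - 1) (fun i => i + 1) ?_ ?_ ?_ ?_ ?_
  · intro a ha; simp only [mem_Icc] at ha; simp only [mem_range]; omega
  · intro a ha; simp only [mem_range] at ha; simp only [mem_Icc]; omega
  · intro a ha; simp only [mem_Icc] at ha; omega
  · intro a _; omega
  · intro a ha; simp only [mem_Icc] at ha; congr 1; omega

lemma sum_prod_eq_sum_multinomial (k n j : ℕ) (g : ℕ → ℝ) :
    ∑ p ∈ Finset.filter (fun p : Fin n → ℕ => ∑ i, p i = j)
        (Fintype.piFinset fun _ : Fin n => Finset.Icc 1 k), ∏ i, g (p i)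
    = ∑ a ∈ Finset.filter (fun a : ℕ → ℕ => ∑ v ∈ Finset.Icc 1 k, v * a v = j)
        (Finset.piAntidiag (Finset.Icc 1 k) n),
        (Nat.multinomial (Finset.Icc 1 k) a : ℝ) * ∏ v ∈ Finset.Icc 1 k, g v ^ a v := by
  classical
  set P : Polynomial ℝ := ∑ v ∈ Finset.Icc 1 k, Polynomial.C (g v) * Polynomial.X ^ v with hP
  have h1 : (P ^ n).coeff j =
      ∑ p ∈ Finset.filter (fun p : Fin n → ℕ => ∑ i, p i = j)
        (Fintype.piFinset fun _ : Fin n => Finset.Icc 1 k), ∏ i, g (p i) := by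
    have : P ^ n = ∏ _i : Fin n, P := by simp [Finset.prod_const]
    rw [this, hP, Finset.prod_univ_sum]
    have h2 : ∀ p : Fin n → ℕ,
        (∏ i : Fin n, Polynomial.C (g (p i)) * Polynomial.X ^ (p i)) =
          Polynomial.C (∏ i, g (p i)) * Polynomial.X ^ (∑ i, p i) := by
      intro p
      rw [Finset.prod_mul_distrib, map_prod, Finset.prod_pow_eq_pow_sum]
    simp_rw [h2]
    rw [Polynomial.finset_sum_coeff]
    simp_rw [Polynomial.coeff_C_mul, Polynomial.coeff_X_pow]
    rw [Finset.sum_filter]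
    refine Finset.sum_congr rfl fun p _ => ?_
    by_cases h : ∑ i, p i = j
    · simp [h]
    · simp [h, Ne.symm h]
  have h3 : (P ^ n).coeff j =
      ∑ a ∈ Finset.filter (fun a : ℕ → ℕ => ∑ v ∈ Finset.Icc 1 k, v * a v = j)
        (Finset.piAntidiag (Finset.Icc 1 k) n),
        (Nat.multinomial (Finset.Icc 1 k) a : ℝ) * ∏ v ∈ Finset.Icc 1 k, g v ^ a v := by
    rw [hP, Finset.sum_pow_eq_sum_piAntidiag]
    have h2 : ∀ a : ℕ → ℕ,
        ((Nat.multinomial (Finset.Icc 1 k) a : Polynomial ℝ) *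
          ∏ v ∈ Finset.Icc 1 k, (Polynomial.C (g v) * Polynomial.X ^ v) ^ a v) =
        Polynomial.C ((Nat.multinomial (Finset.Icc 1 k) a : ℝ) *
            ∏ v ∈ Finset.Icc 1 k, g v ^ a v) *
          Polynomial.X ^ (∑ v ∈ Finset.Icc 1 k, v * a v) := by
      intro a
      simp_rw [mul_pow, ← Polynomial.C_pow, ← pow_mul]
      rw [Finset.prod_mul_distrib, ← map_prod, Finset.prod_pow_eq_pow_sum,
        ← Polynomial.C_eq_natCast, ← mul_assoc, ← Polynomial.C_mul]
    simp_rw [h2]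
    rw [Polynomial.finset_sum_coeff]
    simp_rw [Polynomial.coeff_C_mul, Polynomial.coeff_X_pow]
    rw [Finset.sum_filter]
    refine Finset.sum_congr rfl fun a _ => ?_
    by_cases h : ∑ v ∈ Finset.Icc 1 k, v * a v = j
    · simp [h]
    · simp [h, Ne.symm h]
  rw [← h1, h3]

lemma sum_piAntidiag_eq_sum_finpi (k n j : ℕ) (g : ℕ → ℝ) :
    ∑ a ∈ Finset.filter (fun a : ℕ → ℕ => ∑ v ∈ Finset.Icc 1 k, v * a v = j)
        (Finset.piAntidiag (Finset.Icc 1 k) n),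
        (Nat.multinomial (Finset.Icc 1 k) a : ℝ) * ∏ v ∈ Finset.Icc 1 k, g v ^ a v
    = ∑ b ∈ Finset.filter
        (fun b : Fin k → ℕ => (∑ s, b s) = n ∧ (∑ s : Fin k, ((s : ℕ) + 1) * b s) = j)
        (Fintype.piFinset fun _ : Fin k => Finset.range (j + 1)),
        (Nat.multinomial Finset.univ b : ℝ) * ∏ s : Fin k, g ((s : ℕ) + 1) ^ b s := by
  classical
  refine Finset.sum_nbij' (fun a => fun s : Fin k => a ((s : ℕ) + 1))
    (fun b => fun v : ℕ => if h : 1 ≤ v ∧ v ≤ k then b ⟨v - 1, by omega⟩ else 0)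
    ?_ ?_ ?_ ?_ ?_
  · intro a ha
    simp only [Finset.mem_filter, Finset.mem_piAntidiag] at ha
    obtain ⟨⟨hsum, hsupp⟩, hw⟩ := ha
    rw [sum_Icc_one_eq_sum_fin k (fun v => v * a v)] at hw
    rw [sum_Icc_one_eq_sum_fin k a] at hsum
    simp only [Finset.mem_filter, Fintype.mem_piFinset, Finset.mem_range]
    refine ⟨fun s => ?_, hsum, hw⟩
    have h1 : ((s : ℕ) + 1) * a ((s : ℕ) + 1) ≤ j := hw ▸
      Finset.single_le_sum (f := fun s : Fin k => ((s : ℕ) + 1) * a ((s : ℕ) + 1))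
        (fun _ _ => Nat.zero_le _) (Finset.mem_univ s)
    have h2 : a ((s : ℕ) + 1) ≤ ((s : ℕ) + 1) * a ((s : ℕ) + 1) :=
      Nat.le_mul_of_pos_left _ (Nat.succ_pos _)
    omega
  · intro b hb
    simp only [Finset.mem_filter, Fintype.mem_piFinset, Finset.mem_range] at hb
    obtain ⟨_, hsum, hw⟩ := hb
    simp only [Finset.mem_filter, Finset.mem_piAntidiag]
    have key : ∀ F : ℕ → ℕ → ℕ,
        (∑ v ∈ Finset.Icc 1 k, F v (if h : 1 ≤ v ∧ v ≤ k then b ⟨v - 1, by omega⟩ else 0))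
        = ∑ s : Fin k, F ((s : ℕ) + 1) (b s) := by
      intro F
      rw [sum_Icc_one_eq_sum_fin k
        (fun v => F v (if h : 1 ≤ v ∧ v ≤ k then b ⟨v - 1, by omega⟩ else 0))]
      refine Finset.sum_congr rfl fun s _ => ?_
      have hc : 1 ≤ (s : ℕ) + 1 ∧ (s : ℕ) + 1 ≤ k := ⟨le_refl _ |>.trans (Nat.le_add_left _ _), by omega⟩
      have hbeq : b ⟨(s : ℕ) + 1 - 1, by omega⟩ = b s := congrArg b (Fin.ext (by simp))
      rw [dif_pos hc, hbeq]
    refine ⟨⟨?_, ?_⟩, ?_⟩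
    · rw [key (fun v x => x)]; exact hsum
    · intro v hv
      by_contra hvI
      simp only [Finset.mem_Icc] at hvI
      rw [dif_neg (by omega)] at hv
      exact hv rfl
    · rw [key (fun v x => v * x)]; exact hw
  · intro a ha
    simp only [Finset.mem_filter, Finset.mem_piAntidiag] at ha
    funext v
    dsimp only
    by_cases h : 1 ≤ v ∧ v ≤ k
    · rw [dif_pos h]; congr 1; omega
    · rw [dif_neg h]
      by_contra hv
      have := ha.1.2 v (fun h0 => hv h0.symm)
      simp only [Finset.mem_Icc] at this
      exact h this
  · intro b hb
    funext s
    dsimp only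
    have hc : 1 ≤ (s : ℕ) + 1 ∧ (s : ℕ) + 1 ≤ k := ⟨by omega, by omega⟩
    have hbeq : b ⟨(s : ℕ) + 1 - 1, by omega⟩ = b s := congrArg b (Fin.ext (by simp))
    rw [dif_pos hc, hbeq]
  · intro a ha
    congr 1
    · congr 1
      simp only [Nat.multinomial]
      rw [sum_Icc_one_eq_sum_fin k a, prod_Icc_one_eq_prod_fin k (fun v => Nat.factorial (a v))]
    · dsimp only
      exact prod_Icc_one_eq_prod_fin k (fun v => g v ^ a v)


def peFun (n : ℕ) (p : Fin n → ℕ) (i : ℕ) : ℕ := if h : i < n then p ⟨i, h⟩ else 0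

lemma peFun_of_lt {n : ℕ} (p : Fin n → ℕ) {i : ℕ} (h : i < n) : peFun n p i = p ⟨i, h⟩ :=
  dif_pos h

lemma meas_iid_sum_eq {Ω : Type*} [MeasurableSpace Ω] (μ : Measure Ω) [IsProbabilityMeasure μ]
    (k : ℕ) (Λf : ℕ → ℝ) (hΛf : ∀ j, 0 ≤ Λf j) (Λ : ℝ) (hΛpos : 0 < Λ)
    (X : ℕ → Ω → ℕ) (hXmeas : ∀ i, Measurable (X i))
    (hXval : ∀ i ω, X i ω ∈ Finset.Icc 1 k)
    (hX : ∀ i, ∀ v ∈ Finset.Icc 1 k, μ {ω | X i ω = v} = ENNReal.ofReal (Λf v / Λ))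
    (hXindep : iIndepFun X μ) (n j : ℕ) :
    μ {ω | ∑ i ∈ Finset.range n, X i ω = j}
      = ENNReal.ofReal (∑ p ∈ Finset.filter (fun p : Fin n → ℕ => ∑ i, p i = j)
          (Fintype.piFinset fun _ : Fin n => Finset.Icc 1 k), ∏ i, Λf (p i) / Λ) := by
  classical
  have hmemA : ∀ (p : Fin n → ℕ) (ω : Ω),
      ω ∈ (⋂ i ∈ Finset.range n, X i ⁻¹' {peFun n p i}) ↔
        ∀ (i : ℕ) (h : i < n), X i ω = p ⟨i, h⟩ := by
    intro p ω
    simp only [Set.mem_iInter, Set.mem_preimage, Set.mem_singleton_iff, Finset.mem_range]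
    constructor
    · intro H i h; have := H i h; rwa [peFun_of_lt p h] at this
    · intro H i h; rw [peFun_of_lt p h]; exact H i h
  have hset : {ω | ∑ i ∈ Finset.range n, X i ω = j}
      = ⋃ p ∈ Finset.filter (fun p : Fin n → ℕ => ∑ i, p i = j)
          (Fintype.piFinset fun _ : Fin n => Finset.Icc 1 k),
          (⋂ i ∈ Finset.range n, X i ⁻¹' {peFun n p i}) := by
    ext ω
    simp only [Set.mem_setOf_eq, Set.mem_iUnion]
    constructor
    · intro hω
      refine ⟨fun s => X s ω, ?_, ?_⟩
      · rw [Finset.mem_filter]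
        refine ⟨Fintype.mem_piFinset.2 fun s => hXval s ω, ?_⟩
        rw [Fin.sum_univ_eq_sum_range (fun i => X i ω) n]
        exact hω
      · exact (hmemA _ _).2 fun i h => rfl
    · rintro ⟨p, ⟨hp, hωp⟩⟩
      rw [Finset.mem_filter] at hp
      replace hωp := (hmemA _ _).1 hωp
      rw [← hp.2, ← Fin.sum_univ_eq_sum_range (fun i => X i ω) n]
      exact Finset.sum_congr rfl fun s _ => hωp s s.isLt
  have hdisj : (↑(Finset.filter (fun p : Fin n → ℕ => ∑ i, p i = j)
      (Fintype.piFinset fun _ : Fin n => Finset.Icc 1 k)) : Set (Fin n → ℕ)).PairwiseDisjoint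
      (fun p => ⋂ i ∈ Finset.range n, X i ⁻¹' {peFun n p i}) := by
    intro p hp q hq hpq
    refine Set.disjoint_left.2 fun ω hωp hωq => hpq ?_
    replace hωp := (hmemA _ _).1 hωp
    replace hωq := (hmemA _ _).1 hωq
    funext s
    rw [show p s = p ⟨(s : ℕ), s.isLt⟩ from rfl, ← hωp s s.isLt, ← hωq s s.isLt]
  rw [hset, measure_biUnion_finset hdisj (fun p _ =>
    MeasurableSet.biInter (Finset.range n).countable_toSet fun i _ =>
      (hXmeas i) (measurableSet_singleton _))]
  have hterm : ∀ p ∈ Finset.filter (fun p : Fin n → ℕ => ∑ i, p i = j)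
      (Fintype.piFinset fun _ : Fin n => Finset.Icc 1 k),
      μ (⋂ i ∈ Finset.range n, X i ⁻¹' {peFun n p i})
        = ENNReal.ofReal (∏ i, Λf (p i) / Λ) := by
    intro p hp
    rw [Finset.mem_filter] at hp
    have hpi : ∀ s : Fin n, p s ∈ Finset.Icc 1 k := Fintype.mem_piFinset.1 hp.1
    rw [hXindep.measure_inter_preimage_eq_mul (Finset.range n)
      (fun i _ => measurableSet_singleton (peFun n p i))]
    have h1 : ∀ i ∈ Finset.range n, μ (X i ⁻¹' {peFun n p i})
        = ENNReal.ofReal (if h : i < n then Λf (p ⟨i, h⟩) / Λ else 0) := by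
      intro i hi
      rw [Finset.mem_range] at hi
      rw [peFun_of_lt p hi, dif_pos hi]
      have h2 : X i ⁻¹' {p ⟨i, hi⟩} = {ω | X i ω = p ⟨i, hi⟩} := rfl
      rw [h2, hX i _ (hpi ⟨i, hi⟩)]
    rw [Finset.prod_congr rfl h1]
    rw [← ENNReal.ofReal_prod_of_nonneg (fun i hi => by
      rw [Finset.mem_range] at hi
      rw [dif_pos hi]
      exact div_nonneg (hΛf _) hΛpos.le)]
    congr 1
    rw [← Fin.prod_univ_eq_prod_range
      (fun i => if h : i < n then Λf (p ⟨i, h⟩) / Λ else 0) n]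
    refine Finset.prod_congr rfl fun s _ => ?_
    rw [dif_pos s.isLt]
  rw [Finset.sum_congr rfl hterm]
  rw [← ENNReal.ofReal_sum_of_nonneg fun p _ =>
    Finset.prod_nonneg fun i _ => div_nonneg (hΛf _) hΛpos.le]

lemma pow_le_factorial_add (K0 d : ℕ) : K0 ^ d ≤ (K0 + d)! := by
  induction d with
  | zero => simpa using Nat.one_le_iff_ne_zero.2 (Nat.factorial_ne_zero K0)
  | succ d ih =>
    rw [pow_succ, Nat.add_succ, Nat.factorial_succ]
    calc K0 ^ d * K0 ≤ (K0 + d)! * (K0 + d + 1) := Nat.mul_le_mul ih (by omega)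
      _ = (K0 + d + 1) * (K0 + d)! := Nat.mul_comm _ _

lemma pow_le_factorial_of_le {K0 K : ℕ} (h : K0 ≤ K) : K0 ^ (K - K0) ≤ K ! := by
  have := pow_le_factorial_add K0 (K - K0)
  rwa [Nat.add_sub_cancel' h] at this

lemma prod_cast_ascFactorial (n m : ℕ) :
    (∏ i ∈ Finset.range m, ((n : ℝ) + 1 + i)) = ((n + 1).ascFactorial m : ℝ) := by
  induction m with
  | zero => simp
  | succ m ih =>
    rw [Finset.prod_range_succ, ih, Nat.ascFactorial_succ]
    push_cast
    ring

lemma ascFactorial_eq_choose_mul (n m : ℕ) :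
    (n + 1).ascFactorial m = (n + m).choose m * m ! := by
  have h1 := Nat.factorial_mul_ascFactorial n m
  have h2 := Nat.choose_mul_factorial_mul_factorial (Nat.le_add_left m n)
  rw [Nat.add_sub_cancel] at h2
  apply Nat.eq_of_mul_eq_mul_left (Nat.factorial_pos n)
  rw [h1, ← h2]
  ring

lemma alternating_sum_choose_real (N : ℕ) :
    ∑ i ∈ Finset.range (N + 1), (-1 : ℝ) ^ i * (N.choose i : ℝ)
      = if N = 0 then 1 else 0 := by
  have h := @Int.alternating_sum_range_choose N
  have := congrArg (fun z : ℤ => (z : ℝ)) h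
  push_cast at this
  rw [this]

set_option maxHeartbeats 1000000 in
lemma ntfpp_pmf_nonneg {α Λ : ℝ} (hα : α ∈ Set.Ioc (0 : ℝ) 1) (hΛpos : 0 < Λ)
    (hsum : (∑' n : ℕ, ENNReal.ofReal
        (Λ ^ ((n : ℝ) * α) * prabhakar α ((n : ℝ) * α + 1) ((n : ℝ) + 1) (-(Λ ^ α)))) = 1)
    (n : ℕ) :
    0 ≤ Λ ^ ((n : ℝ) * α) * prabhakar α ((n : ℝ) * α + 1) ((n : ℝ) + 1) (-(Λ ^ α)) := by
  obtain ⟨hα0, hα1⟩ := hα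
  set y := Λ ^ α with hy
  have hy0 : 0 < y := Real.rpow_pos_of_pos hΛpos α
  set t : ℕ → ℝ := fun n =>
    Λ ^ ((n : ℝ) * α) * prabhakar α ((n : ℝ) * α + 1) ((n : ℝ) + 1) (-y) with ht
  set f : ℕ × ℕ → ℝ := fun p =>
    (((p.1 + p.2).choose p.2 : ℕ) : ℝ) * y ^ p.1 * (-y) ^ p.2
      / Real.Gamma (α * (((p.1 + p.2 : ℕ) : ℝ)) + 1) with hf
  have hΓpos : ∀ N : ℕ, 0 < Real.Gamma (α * (N : ℝ) + 1) := fun N =>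
    Real.Gamma_pos_of_pos (by positivity)
  -- diagonal absolute sums
  have habs_diag : ∀ N : ℕ, ∑ p ∈ Finset.HasAntidiagonal.antidiagonal N, |f p|
      = (2 : ℝ) ^ N * y ^ N / Real.Gamma (α * (N : ℝ) + 1) := by
    intro N
    rw [Finset.Nat.sum_antidiagonal_eq_sum_range_succ_mk]
    have hterm : ∀ i ∈ Finset.range (N + 1),
        |f (i, N - i)| = (N.choose (N - i) : ℝ) * y ^ N / Real.Gamma (α * (N : ℝ) + 1) := by
      intro i hi
      rw [Finset.mem_range] at hi
      have hadd : i + (N - i) = N := by omega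
      have base : |f (i, N - i)| = (((i + (N - i)).choose (N - i) : ℕ) : ℝ)
          * y ^ (i + (N - i)) / Real.Gamma (α * (((i + (N - i) : ℕ)) : ℝ) + 1) := by
        rw [hf]
        dsimp only
        rw [abs_div, abs_of_pos (hΓpos (i + (N - i))), abs_mul, abs_mul, abs_pow, abs_pow,
          abs_neg, abs_of_pos hy0, Nat.abs_cast, mul_assoc, ← pow_add]
      rw [base, hadd]
    rw [Finset.sum_congr rfl hterm]
    rw [← Finset.sum_div, ← Finset.sum_mul]
    have : ∑ i ∈ Finset.range (N + 1), (N.choose (N - i) : ℝ) = 2 ^ N := by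
      rw [show (∑ i ∈ Finset.range (N + 1), (N.choose (N - i) : ℝ))
          = ∑ i ∈ Finset.range (N + 1), (fun j => (N.choose j : ℝ)) (N + 1 - 1 - i) from
        Finset.sum_congr rfl fun i hi => by simp]
      rw [Finset.sum_range_reflect (fun j => (N.choose j : ℝ)) (N + 1)]
      exact_mod_cast congrArg (fun z : ℕ => (z : ℝ)) (Nat.sum_range_choose N)
    rw [this]
  -- diagonal signed sums
  have hdiag : ∀ N : ℕ, ∑ p ∈ Finset.HasAntidiagonal.antidiagonal N, f p = if N = 0 then 1 else 0 := by
    intro N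
    rw [Finset.Nat.sum_antidiagonal_eq_sum_range_succ_mk]
    have hterm : ∀ i ∈ Finset.range (N + 1),
        f (i, N - i) = ((-1 : ℝ) ^ (N - i) * (N.choose (N - i) : ℝ))
          * (y ^ N / Real.Gamma (α * (N : ℝ) + 1)) := by
      intro i hi
      rw [Finset.mem_range] at hi
      have hadd : i + (N - i) = N := by omega
      have base : f (i, N - i) = ((-1 : ℝ) ^ (N - i)
            * (((i + (N - i)).choose (N - i) : ℕ) : ℝ))
          * (y ^ (i + (N - i)) / Real.Gamma (α * (((i + (N - i) : ℕ)) : ℝ) + 1)) := by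
        rw [hf]
        dsimp only
        rw [neg_pow, pow_add]
        ring
      rw [base, hadd]
    rw [Finset.sum_congr rfl hterm, ← Finset.sum_mul]
    have halt : ∑ i ∈ Finset.range (N + 1), (-1 : ℝ) ^ (N - i) * (N.choose (N - i) : ℝ)
        = if N = 0 then 1 else 0 := by
      rw [show (∑ i ∈ Finset.range (N + 1), (-1 : ℝ) ^ (N - i) * (N.choose (N - i) : ℝ))
          = ∑ i ∈ Finset.range (N + 1),
            (fun j => (-1 : ℝ) ^ j * (N.choose j : ℝ)) (N + 1 - 1 - i) from
        Finset.sum_congr rfl fun i hi => by simp]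
      rw [Finset.sum_range_reflect (fun j => (-1 : ℝ) ^ j * (N.choose j : ℝ)) (N + 1)]
      exact alternating_sum_choose_real N
    rw [halt]
    split
    · rename_i hN0
      subst hN0
      simp [Real.Gamma_one]
    · ring
  -- summability of the diagonal bound
  have hejG : Summable (fun N : ℕ => (2 * y) ^ N / Real.Gamma (α * (N : ℝ) + 1)) := by
    set C := 2 * y with hC
    have hC0 : 0 < C := by positivity
    obtain ⟨K0', hK0'⟩ := exists_nat_ge ((2 * C) ^ (1 / α))
    set K0 := max K0' 1 with hK0def
    have hK01 : 1 ≤ K0 := le_max_right _ _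
    have hK0R : (2 * C) ^ (1 / α) ≤ (K0 : ℝ) := by
      refine le_trans hK0' ?_
      exact_mod_cast le_max_left K0' 1
    have h2C : (0 : ℝ) < 2 * C := by positivity
    have hK0pos : (0 : ℝ) < (K0 : ℝ) := by exact_mod_cast hK01
    have hK0α : 2 * C ≤ (K0 : ℝ) ^ α := by
      have h0 : ((2 * C) ^ (1 / α)) ^ α = 2 * C := by
        rw [← Real.rpow_mul h2C.le, one_div, inv_mul_cancel₀ (ne_of_gt hα0), Real.rpow_one]
      calc 2 * C = ((2 * C) ^ (1 / α)) ^ α := h0.symm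
        _ ≤ (K0 : ℝ) ^ α := Real.rpow_le_rpow (Real.rpow_nonneg h2C.le _) hK0R hα0.le
    set N1 := ⌈((K0 : ℝ) + 1) / α⌉₊ with hN1
    have hbound : ∀ N : ℕ, N1 ≤ N →
        C ^ N / Real.Gamma (α * (N : ℝ) + 1) ≤ ((K0 : ℝ) ^ (K0 + 1)) * (1 / 2) ^ N := by
      intro N hN
      have hαN : (K0 : ℝ) + 1 ≤ α * N := by
        have h1 : ((K0 : ℝ) + 1) / α ≤ (N1 : ℝ) := Nat.le_ceil _
        have h2 : (N1 : ℝ) ≤ N := by exact_mod_cast hN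
        calc (K0 : ℝ) + 1 = (((K0 : ℝ) + 1) / α) * α := by field_simp
          _ ≤ (N : ℝ) * α := mul_le_mul_of_nonneg_right (h1.trans h2) hα0.le
          _ = α * N := mul_comm _ _
      set K := ⌊α * (N : ℝ)⌋₊ with hK
      have hK0K : K0 + 1 ≤ K := by
        apply Nat.le_floor
        push_cast
        linarith
      have hKle : (K : ℝ) ≤ α * N := Nat.floor_le (by positivity)
      have hKgt : α * (N : ℝ) < K + 1 := Nat.lt_floor_add_one _
      have hΓ1 : ((K ! : ℕ) : ℝ) ≤ Real.Gamma (α * (N : ℝ) + 1) := by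
        rw [← Real.Gamma_nat_eq_factorial]
        apply Real.Gamma_strictMonoOn_Ici.monotoneOn
        · simp only [Set.mem_Ici]
          have h1K : (1 : ℕ) ≤ K := by omega
          have h1K' : (1 : ℝ) ≤ (K : ℝ) := by exact_mod_cast h1K
          linarith
        · simp only [Set.mem_Ici]
          have hh : (1 : ℝ) ≤ (K0 : ℝ) := by exact_mod_cast hK01
          linarith
        · push_cast; linarith
      have hfact : ((K0 : ℝ)) ^ (K - K0) ≤ ((K ! : ℕ) : ℝ) := by
        exact_mod_cast pow_le_factorial_of_le (by omega : K0 ≤ K)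
      have hsplit : ((K0 : ℝ)) ^ (K - K0) = ((K0 : ℝ)) ^ (K : ℕ) / ((K0 : ℝ)) ^ (K0 : ℕ) := by
        rw [eq_div_iff (by positivity), ← pow_add, Nat.sub_add_cancel (by omega : K0 ≤ K)]
      have hgeom : ((2 * C) ^ N) / (K0 : ℝ) ≤ ((K0 : ℝ)) ^ (K : ℕ) := by
        have h1 : ((K0 : ℝ)) ^ (K : ℕ) = (K0 : ℝ) ^ ((K : ℕ) : ℝ) := by
          rw [Real.rpow_natCast]
        have h01 : (1 : ℝ) ≤ (K0 : ℝ) := by exact_mod_cast hK01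
        have h2 : (K0 : ℝ) ^ (α * (N : ℝ) - 1) ≤ (K0 : ℝ) ^ ((K : ℕ) : ℝ) :=
          Real.rpow_le_rpow_of_exponent_le h01 (by linarith)
        have h3 : (K0 : ℝ) ^ (α * (N : ℝ) - 1)
            = ((K0 : ℝ) ^ α) ^ N / (K0 : ℝ) := by
          rw [Real.rpow_sub hK0pos, Real.rpow_one]
          congr 1
          rw [← Real.rpow_natCast ((K0 : ℝ) ^ α) N, ← Real.rpow_mul hK0pos.le]
        have h4 : ((2 * C) ^ N) / (K0 : ℝ) ≤ ((K0 : ℝ) ^ α) ^ N / (K0 : ℝ) := by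
          gcongr <;> first | exact hK0α | positivity
        calc ((2 * C) ^ N) / (K0 : ℝ) ≤ ((K0 : ℝ) ^ α) ^ N / (K0 : ℝ) := h4
          _ = (K0 : ℝ) ^ (α * (N : ℝ) - 1) := h3.symm
          _ ≤ (K0 : ℝ) ^ ((K : ℕ) : ℝ) := h2
          _ = ((K0 : ℝ)) ^ (K : ℕ) := h1.symm
      have hΓlow : ((2 * C) ^ N) / ((K0 : ℝ)) ^ (K0 + 1) ≤ Real.Gamma (α * (N : ℝ) + 1) := by
        have e1 : ((2 * C) ^ N) / ((K0 : ℝ)) ^ (K0 + 1)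
            = (((2 * C) ^ N) / (K0 : ℝ)) / ((K0 : ℝ)) ^ (K0 : ℕ) := by
          rw [div_div, ← pow_succ']
        rw [e1]
        calc (((2 * C) ^ N) / (K0 : ℝ)) / ((K0 : ℝ)) ^ (K0 : ℕ)
            ≤ ((K0 : ℝ)) ^ (K : ℕ) / ((K0 : ℝ)) ^ (K0 : ℕ) := by
              gcongr <;> first | exact hgeom | positivity
          _ = ((K0 : ℝ)) ^ (K - K0) := hsplit.symm
          _ ≤ ((K ! : ℕ) : ℝ) := hfact
          _ ≤ Real.Gamma (α * (N : ℝ) + 1) := hΓ1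
      have hΓlowpos : (0 : ℝ) < ((2 * C) ^ N) / ((K0 : ℝ)) ^ (K0 + 1) := by positivity
      calc C ^ N / Real.Gamma (α * (N : ℝ) + 1)
          ≤ C ^ N / (((2 * C) ^ N) / ((K0 : ℝ)) ^ (K0 + 1)) := by
            apply div_le_div_of_nonneg_left (by positivity) hΓlowpos hΓlow
        _ = ((K0 : ℝ) ^ (K0 + 1)) * (1 / 2) ^ N := by
            have h2CN : ((2 : ℝ) * C) ^ N = 2 ^ N * C ^ N := mul_pow _ _ _
            have hCN : (C : ℝ) ^ N ≠ 0 := pow_ne_zero _ (ne_of_gt hC0)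
            have h2N : ((2 : ℝ)) ^ N ≠ 0 := pow_ne_zero _ two_ne_zero
            have hDN : ((K0 : ℝ)) ^ (K0 + 1) ≠ 0 := pow_ne_zero _ (ne_of_gt hK0pos)
            rw [h2CN, div_pow, one_pow]
            field_simp
    rw [← summable_nat_add_iff N1]
    apply Summable.of_nonneg_of_le (fun N => by positivity)
      (g := fun N => (2 * y) ^ (N + N1) / Real.Gamma (α * ((N + N1 : ℕ) : ℝ) + 1))
      (f := fun N => (((K0 : ℝ) ^ (K0 + 1)) * (1 / 2) ^ N1) * (1 / 2) ^ N)
    · intro N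
      have := hbound (N + N1) (by omega)
      rw [← hC]
      calc C ^ (N + N1) / Real.Gamma (α * ((N + N1 : ℕ) : ℝ) + 1)
          ≤ ((K0 : ℝ) ^ (K0 + 1)) * (1 / 2) ^ (N + N1) := by
            convert this using 4 <;> push_cast <;> ring
        _ = (((K0 : ℝ) ^ (K0 + 1)) * (1 / 2) ^ N1) * (1 / 2) ^ N := by
            rw [pow_add]; ring
    · exact (summable_geometric_of_lt_one (by norm_num) (by norm_num)).mul_left _
  -- absolute summability on the product
  have habs : Summable (fun p : ℕ × ℕ => |f p|) := by
    rw [← (Finset.HasAntidiagonal.sigmaAntidiagonalEquivProd (A := ℕ)).summable_iff]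
    apply (summable_sigma_of_nonneg (fun x => abs_nonneg _)).2
    constructor
    · intro N
      exact (hasSum_fintype _).summable
    · apply Summable.congr (f := fun N : ℕ => (2 * y) ^ N / Real.Gamma (α * (N : ℝ) + 1)) hejG
      intro N
      rw [tsum_fintype]
      have : ∑ p : (Finset.HasAntidiagonal.antidiagonal N : Finset (ℕ × ℕ)),
          |f ((Finset.HasAntidiagonal.sigmaAntidiagonalEquivProd (A := ℕ)) ⟨N, p⟩)|
          = ∑ p ∈ Finset.HasAntidiagonal.antidiagonal N, |f p| := by
        rw [← Finset.sum_coe_sort (Finset.HasAntidiagonal.antidiagonal N) (fun p => |f p|)]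
        rfl
      rw [this, habs_diag N, mul_pow]
  have hfsum : Summable f := habs.of_abs
  -- total sum equals one
  have htsum : ∑' p : ℕ × ℕ, f p = 1 := by
    have e1 : ∑' p : ℕ × ℕ, f p
        = ∑' x : Σ N : ℕ, (Finset.HasAntidiagonal.antidiagonal N : Finset (ℕ × ℕ)),
            f ((Finset.HasAntidiagonal.sigmaAntidiagonalEquivProd (A := ℕ)) x) :=
      ((Finset.HasAntidiagonal.sigmaAntidiagonalEquivProd (A := ℕ)).tsum_eq f).symm
    have hS : Summable (fun x : Σ N : ℕ, (Finset.HasAntidiagonal.antidiagonal N : Finset (ℕ × ℕ)) =>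
        f ((Finset.HasAntidiagonal.sigmaAntidiagonalEquivProd (A := ℕ)) x)) :=
      ((Finset.HasAntidiagonal.sigmaAntidiagonalEquivProd (A := ℕ)).summable_iff).2 hfsum
    rw [e1, Summable.tsum_sigma' (fun N => (hasSum_fintype _).summable) hS]
    have e2 : ∀ N : ℕ, ∑' p : (Finset.HasAntidiagonal.antidiagonal N : Finset (ℕ × ℕ)),
        f ((Finset.HasAntidiagonal.sigmaAntidiagonalEquivProd (A := ℕ)) ⟨N, p⟩) = if N = 0 then 1 else 0 := by
      intro N
      rw [tsum_fintype]
      have : ∑ p : (Finset.HasAntidiagonal.antidiagonal N : Finset (ℕ × ℕ)),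
          f ((Finset.HasAntidiagonal.sigmaAntidiagonalEquivProd (A := ℕ)) ⟨N, p⟩)
          = ∑ p ∈ Finset.HasAntidiagonal.antidiagonal N, f p := by
        rw [← Finset.sum_coe_sort (Finset.HasAntidiagonal.antidiagonal N) (fun p => f p)]
        rfl
      rw [this, hdiag N]
    rw [tsum_congr e2]
    exact tsum_ite_eq 0 1
  -- row sums are the pmf values
  have hrow_eq : ∀ m : ℕ, t m = ∑' l : ℕ, f (m, l) := by
    intro m
    have hpow : Λ ^ ((m : ℝ) * α) = y ^ m := by
      rw [mul_comm, Real.rpow_mul hΛpos.le, Real.rpow_natCast]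
    rw [ht]
    dsimp only
    rw [hpow, prabhakar, ← tsum_mul_left]
    apply tsum_congr
    intro l
    have hasc : (∏ i ∈ Finset.range l, ((m : ℝ) + 1 + i)) = ((m + l).choose l * l ! : ℕ) := by
      rw [prod_cast_ascFactorial m l, ascFactorial_eq_choose_mul]
    rw [hasc, hf]
    dsimp only
    have hΓarg : α * (l : ℝ) + ((m : ℝ) * α + 1) = α * (((m + l : ℕ) : ℝ)) + 1 := by
      push_cast; ring
    rw [hΓarg]
    have hΓne : Real.Gamma (α * (((m + l : ℕ) : ℝ)) + 1) ≠ 0 := ne_of_gt (hΓpos (m + l))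
    have hlne : ((l ! : ℕ) : ℝ) ≠ 0 := by exact_mod_cast Nat.factorial_ne_zero l
    push_cast
    field_simp
  -- summability of rows
  have hrows := (summable_prod_of_nonneg (fun p => abs_nonneg (f p))).1 habs
  have hts : Summable t := by
    apply Summable.of_norm_bounded hrows.2
    intro m
    rw [hrow_eq m, Real.norm_eq_abs]
    have h1 : Summable fun l => ‖f (m, l)‖ :=
      (hrows.1 m).congr fun l => (Real.norm_eq_abs _).symm
    have h2 := norm_tsum_le_tsum_norm h1
    rw [Real.norm_eq_abs] at h2
    refine h2.trans (le_of_eq ?_)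
    exact tsum_congr fun l => Real.norm_eq_abs _
  have htt : ∑' m, t m = 1 := by
    rw [tsum_congr hrow_eq, ← Summable.tsum_prod' hfsum (fun m => (hrows.1 m).of_abs)]
    exact htsum
  -- extract nonnegativity
  have hsum' : (∑' m : ℕ, ENNReal.ofReal (t m)) = 1 := hsum
  have hne : (∑' m : ℕ, ENNReal.ofReal (t m)) ≠ ⊤ := by
    rw [hsum']
    exact ENNReal.one_ne_top
  have hu : Summable (fun m => (ENNReal.ofReal (t m)).toReal) := ENNReal.summable_toReal hne
  have hu1 : ∑' m, (ENNReal.ofReal (t m)).toReal = 1 := by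
    rw [← ENNReal.tsum_toReal_eq (fun m => ENNReal.ofReal_ne_top)]
    rw [hsum', ENNReal.toReal_one]
  have hle : ∀ m, t m ≤ (ENNReal.ofReal (t m)).toReal := by
    intro m
    rcases le_or_gt 0 (t m) with h | h
    · rw [ENNReal.toReal_ofReal h]
    · calc t m ≤ 0 := h.le
        _ ≤ _ := ENNReal.toReal_nonneg
  have hv : Summable (fun m => (ENNReal.ofReal (t m)).toReal - t m) := hu.sub hts
  have hv0 : ∑' m, ((ENNReal.ofReal (t m)).toReal - t m) = 0 := by
    rw [Summable.tsum_sub hu hts, hu1, htt]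
    ring
  have hkey : (ENNReal.ofReal (t n)).toReal - t n ≤ 0 := by
    rw [← hv0]
    exact Summable.le_tsum hv n (fun m _ => sub_nonneg.2 (hle m))
  have : t n = (ENNReal.ofReal (t n)).toReal := by
    have h1 := sub_nonneg.2 (hle n)
    linarith
  have final : (0 : ℝ) ≤ t n := by
    rw [this]
    exact ENNReal.toReal_nonneg
  exact final


set_option maxHeartbeats 1000000 in
theorem nhgfcp_pmf {Ω : Type*} [MeasurableSpace Ω] (μ : Measure Ω) [IsProbabilityMeasure μ]
    (α : ℝ) (hα : α ∈ Set.Ioc (0 : ℝ) 1)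
    (k : ℕ) (hk : 1 ≤ k) (Λf : ℕ → ℝ) (hΛf : ∀ j, 0 ≤ Λf j)
    (Λ : ℝ) (hΛ : Λ = ∑ j ∈ Finset.Icc 1 k, Λf j) (hΛpos : 0 < Λ)
    (N : Ω → ℕ) (X : ℕ → Ω → ℕ)
    (hNmeas : Measurable N) (hXmeas : ∀ i, Measurable (X i))
    (hN : ∀ n : ℕ, μ {ω | N ω = n} =
      ENNReal.ofReal (Λ ^ ((n : ℝ) * α) * prabhakar α ((n : ℝ) * α + 1) ((n : ℝ) + 1) (-(Λ ^ α))))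
    (hXval : ∀ i ω, X i ω ∈ Finset.Icc 1 k)
    (hX : ∀ i, ∀ j ∈ Finset.Icc 1 k, μ {ω | X i ω = j} = ENNReal.ofReal (Λf j / Λ))
    (hXindep : iIndepFun X μ)
    (hNX : IndepFun N (fun ω => fun i : ℕ => X i ω) μ)
    (j : ℕ) (hj : 1 ≤ j) :
    μ {ω | ∑ i ∈ Finset.range (N ω), X i ω = j}
      = ENNReal.ofReal (∑ r ∈ Finset.range (j + 1),
          ∑ a ∈ Finset.filter
              (fun a : Fin k → ℕ => (∑ s, a s) = r ∧ (∑ s : Fin k, ((s : ℕ) + 1) * a s) = j)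
              (Fintype.piFinset fun _ : Fin k => Finset.range (j + 1)),
            (Nat.multinomial Finset.univ a : ℝ) * (∏ s : Fin k, Λf ((s : ℕ) + 1) ^ a s)
              * Λ ^ (-((r : ℝ) * (1 - α)))
              * prabhakar α ((r : ℝ) * α + 1) ((r : ℝ) + 1) (-(Λ ^ α))) := by
  classical
  obtain ⟨hα0, hα1⟩ := hα
  set t : ℕ → ℝ := fun r =>
    Λ ^ ((r : ℝ) * α) * prabhakar α ((r : ℝ) * α + 1) ((r : ℝ) + 1) (-(Λ ^ α)) with htdef
  set c : ℕ → ℝ := fun r => ∑ a ∈ Finset.filter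
      (fun a : Fin k → ℕ => (∑ s, a s) = r ∧ (∑ s : Fin k, ((s : ℕ) + 1) * a s) = j)
      (Fintype.piFinset fun _ : Fin k => Finset.range (j + 1)),
      (Nat.multinomial Finset.univ a : ℝ) * ∏ s : Fin k, (Λf ((s : ℕ) + 1) / Λ) ^ a s with hcdef
  have hc_nonneg : ∀ r, 0 ≤ c r := by
    intro r
    apply Finset.sum_nonneg
    intro a _
    apply mul_nonneg (Nat.cast_nonneg _)
    exact Finset.prod_nonneg fun s _ => pow_nonneg (div_nonneg (hΛf _) hΛpos.le) _
  have hSr : ∀ r : ℕ, μ {ω | ∑ i ∈ Finset.range r, X i ω = j} = ENNReal.ofReal (c r) := by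
    intro r
    rw [meas_iid_sum_eq μ k Λf hΛf Λ hΛpos X hXmeas hXval hX hXindep r j]
    congr 1
    have e1 := sum_prod_eq_sum_multinomial k r j (fun v => Λf v / Λ)
    have e2 := sum_piAntidiag_eq_sum_finpi k r j (fun v => Λf v / Λ)
    rw [e1, e2]
  have hNmeas' : ∀ n : ℕ, MeasurableSet {ω | N ω = n} := fun n =>
    hNmeas (measurableSet_singleton n)
  have hNdisj : Pairwise (Function.onFun Disjoint fun n => {ω | N ω = n}) := by
    intro a b hab
    refine Set.disjoint_left.2 fun ω ha hb => hab ?_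
    rw [Set.mem_setOf_eq] at ha hb
    rw [← ha, ← hb]
  have hNsum1 : ∑' n : ℕ, μ {ω | N ω = n} = 1 := by
    rw [← measure_iUnion hNdisj hNmeas']
    have : (⋃ n : ℕ, {ω | N ω = n}) = Set.univ := by
      ext ω
      simp only [Set.mem_iUnion, Set.mem_setOf_eq, Set.mem_univ, iff_true]
      exact ⟨N ω, rfl⟩
    rw [this, measure_univ]
  have htsum1 : (∑' n : ℕ, ENNReal.ofReal
      (Λ ^ ((n : ℝ) * α) * prabhakar α ((n : ℝ) * α + 1) ((n : ℝ) + 1) (-(Λ ^ α)))) = 1 := by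
    rw [← hNsum1]
    exact tsum_congr fun n => (hN n).symm
  have htn : ∀ r : ℕ, 0 ≤ t r := fun r =>
    ntfpp_pmf_nonneg ⟨hα0, hα1⟩ hΛpos htsum1 r
  have hSmeasfun : ∀ r : ℕ, Measurable fun ω => ∑ i ∈ Finset.range r, X i ω := fun r =>
    Finset.measurable_sum (Finset.range r) fun i _ => hXmeas i
  have hSmeas : ∀ r : ℕ, MeasurableSet {ω | ∑ i ∈ Finset.range r, X i ω = j} := fun r =>
    (hSmeasfun r) (measurableSet_singleton j)
  have hdecomp : {ω | ∑ i ∈ Finset.range (N ω), X i ω = j}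
      = ⋃ r : ℕ, ({ω | N ω = r} ∩ {ω | ∑ i ∈ Finset.range r, X i ω = j}) := by
    ext ω
    simp only [Set.mem_setOf_eq, Set.mem_iUnion, Set.mem_inter_iff]
    constructor
    · intro h
      exact ⟨N ω, rfl, h⟩
    · rintro ⟨r, hr, h⟩
      rw [← hr] at h
      exact h
  have hdisj2 : Pairwise (Function.onFun Disjoint
      fun r => ({ω | N ω = r} ∩ {ω | ∑ i ∈ Finset.range r, X i ω = j})) := by
    intro a b hab
    refine Set.disjoint_left.2 fun ω ha hb => hab ?_
    rw [← ha.1, ← hb.1]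
  have hmeas2 : ∀ r : ℕ, MeasurableSet
      ({ω | N ω = r} ∩ {ω | ∑ i ∈ Finset.range r, X i ω = j}) := fun r =>
    (hNmeas' r).inter (hSmeas r)
  have hind : ∀ r : ℕ, IndepFun N (fun ω => ∑ i ∈ Finset.range r, X i ω) μ := by
    intro r
    have hg : Measurable fun f : ℕ → ℕ => ∑ i ∈ Finset.range r, f i :=
      Finset.measurable_sum (Finset.range r) fun i _ => measurable_pi_apply i
    exact hNX.comp measurable_id hg
  have hterm : ∀ r : ℕ, μ ({ω | N ω = r} ∩ {ω | ∑ i ∈ Finset.range r, X i ω = j})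
      = μ {ω | N ω = r} * μ {ω | ∑ i ∈ Finset.range r, X i ω = j} := by
    intro r
    exact (hind r).measure_inter_preimage_eq_mul ({r} : Set ℕ) ({j} : Set ℕ)
      (measurableSet_singleton r) (measurableSet_singleton j)
  have hzero : ∀ r : ℕ, j < r → μ {ω | ∑ i ∈ Finset.range r, X i ω = j} = 0 := by
    intro r hr
    have hempty : {ω | ∑ i ∈ Finset.range r, X i ω = j} = ∅ := by
      ext ω
      simp only [Set.mem_setOf_eq, Set.mem_empty_iff_false, iff_false]
      intro h
      have hge : r ≤ ∑ i ∈ Finset.range r, X i ω := by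
        calc r = ∑ _i ∈ Finset.range r, 1 := by simp
          _ ≤ ∑ i ∈ Finset.range r, X i ω :=
            Finset.sum_le_sum fun i _ => (Finset.mem_Icc.1 (hXval i ω)).1
      omega
    rw [hempty, measure_empty]
  rw [hdecomp, measure_iUnion hdisj2 hmeas2]
  rw [tsum_eq_sum (s := Finset.range (j + 1)) (fun r hr => by
    rw [hterm r, hzero r (by simpa using hr), mul_zero])]
  have hterm2 : ∀ r ∈ Finset.range (j + 1),
      μ ({ω | N ω = r} ∩ {ω | ∑ i ∈ Finset.range r, X i ω = j})
        = ENNReal.ofReal (c r * t r) := by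
    intro r _
    rw [hterm r, hN r, hSr r]
    rw [show (Λ ^ ((r : ℝ) * α) * prabhakar α ((r : ℝ) * α + 1) ((r : ℝ) + 1) (-(Λ ^ α))) = t r
      from rfl]
    rw [mul_comm, ← ENNReal.ofReal_mul (hc_nonneg r)]
  rw [Finset.sum_congr rfl hterm2]
  rw [← ENNReal.ofReal_sum_of_nonneg fun r _ => mul_nonneg (hc_nonneg r) (htn r)]
  congr 1
  refine Finset.sum_congr rfl fun r _ => ?_
  rw [hcdef]
  dsimp only
  rw [Finset.sum_mul]
  refine Finset.sum_congr rfl fun a ha => ?_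
  rw [Finset.mem_filter] at ha
  obtain ⟨_, hasum, _⟩ := ha
  have hΛr : (Λ : ℝ) ^ (r : ℕ) ≠ 0 := pow_ne_zero _ (ne_of_gt hΛpos)
  have hprod : (∏ s : Fin k, (Λf ((s : ℕ) + 1) / Λ) ^ a s)
      = (∏ s : Fin k, Λf ((s : ℕ) + 1) ^ a s) / Λ ^ (r : ℕ) := by
    simp_rw [div_pow]
    rw [Finset.prod_div_distrib, Finset.prod_pow_eq_pow_sum, hasum]
  have hpow : Λ ^ (-((r : ℝ) * (1 - α))) = Λ ^ ((r : ℝ) * α) / Λ ^ (r : ℕ) := by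
    rw [← Real.rpow_natCast Λ r, ← Real.rpow_sub hΛpos]
    congr 1
    ring
  rw [hprod, htdef]
  dsimp only
  rw [hpow]
  field_simp
end
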